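/- arXiv:2406.13425 — 4 statements merged into one kernel-verified Lean document; each statement's English description precedes it below -/
import Mathlib

section
/- Let X be a random vector in R^d, G : R^d → R^m square integrable, U_r ∈ R^{d×r} and V_s ∈ R^{m×s} matrices with orthonormal columns. Define G*(x) = V_s g*(U_r^T x) + G*_⊥ where g*(x_r) = V_s^T E[G(X) | U_r^T X = x_r] and G*_⊥ = (I_m − V_s V_s^T) E[G(X)]. Then G* minimizes the mean squared error E[‖G(X) − G̃(X)‖²] over all square-integrable functions G̃ of the form G̃(x) = V_s g̃(U_r^T x) + G̃_⊥ with g̃ : R^r → R^s and G̃_⊥ ∈ R^m. -/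
noncomputable section
open MeasureTheory Matrix

/-- Squared Euclidean norm. -/
def sqn {n : ℕ} (v : Fin n → ℝ) : ℝ := ∑ i, (v i)^2

section Helpers
variable {Ω : Type*} {m m0 : MeasurableSpace Ω} {μ : Measure Ω}

lemma memℒp_two_condexp [IsFiniteMeasure μ] (hm : m ≤ m0)
    {f : Ω → ℝ} (hf : MemLp f 2 μ) : MemLp (μ[f|m]) 2 μ := by
  have hae : (↑↑(condExpL2 ℝ ℝ hm (hf.toLp f)) : Ω → ℝ) =ᵐ[μ] μ[f|m] := by
    refine ae_eq_condExp_of_forall_setIntegral_eq hm (hf.integrable one_le_two)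
      (fun s _ hμs => integrableOn_condExpL2_of_measure_ne_top hm hμs.ne _)
      (fun s hs hμs => ?_) (aestronglyMeasurable_condExpL2 hm _)
    exact (integral_condExpL2_eq hm (hf.toLp f) hs hμs.ne).trans
      (setIntegral_congr_ae (hm s hs) (hf.coeFn_toLp.mono fun x hx _ => hx))
  exact (Lp.memLp _).ae_eq hae

lemma integrable_mul_L2 {f g : Ω → ℝ} (hf : MemLp f 2 μ) (hg : MemLp g 2 μ) :
    Integrable (fun ω => f ω * g ω) μ := by
  rw [← memLp_one_iff_integrable]
  have := hg.smul (𝕜 := ℝ) hf (p := 2) (q := 2) (r := 1)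
  exact this

/-- Conditional expectation minimizes the L² distance among m-measurable functions. -/
lemma condexp_L2_min [IsProbabilityMeasure μ] (hm : m ≤ m0)
    {f g : Ω → ℝ} (hf : MemLp f 2 μ) (hg : MemLp g 2 μ) (hgm : StronglyMeasurable[m] g) :
    ∫ ω, (f ω - (μ[f|m]) ω) ^ 2 ∂μ ≤ ∫ ω, (f ω - g ω) ^ 2 ∂μ := by
  set c : Ω → ℝ := μ[f|m] with hc
  have hcL2 : MemLp c 2 μ := memℒp_two_condexp hm hf
  have hfc : MemLp (fun ω => f ω - c ω) 2 μ := hf.sub hcL2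
  have hh : MemLp (fun ω => c ω - g ω) 2 μ := hcL2.sub hg
  have hhm : StronglyMeasurable[m] (fun ω => c ω - g ω) :=
    stronglyMeasurable_condExp.sub hgm
  have hcross_int : Integrable (fun ω => (c ω - g ω) * (f ω - c ω)) μ :=
    integrable_mul_L2 hh hfc
  have hfc_int : Integrable (fun ω => f ω - c ω) μ :=
    (hf.integrable one_le_two).sub integrable_condExp
  have h0 : μ[(fun ω => f ω - c ω)|m] =ᵐ[μ] 0 := by
    have h1 := condExp_sub (μ := μ) (m := m) (f := f) (g := c)
      (hf.integrable one_le_two) integrable_condExp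
    have h2 : μ[c|m] = c := condExp_of_stronglyMeasurable hm stronglyMeasurable_condExp
      integrable_condExp
    refine h1.trans ?_
    rw [h2]
    filter_upwards with ω
    simp [hc]
  have hpull := condExp_mul_of_stronglyMeasurable_left (μ := μ) hhm hcross_int hfc_int
  have hcross : ∫ ω, (c ω - g ω) * (f ω - c ω) ∂μ = 0 := by
    rw [← integral_condExp (f := fun ω => (c ω - g ω) * (f ω - c ω)) hm]
    have h3 : μ[(fun ω => c ω - g ω) * (fun ω => f ω - c ω)|m] =ᵐ[μ] (0 : Ω → ℝ) := by
      refine hpull.trans ?_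
      filter_upwards [h0] with ω hω
      simp only [Pi.mul_apply, hω, Pi.zero_apply, mul_zero]
    calc ∫ ω, (μ[fun ω => (c ω - g ω) * (f ω - c ω)|m]) ω ∂μ
        = ∫ ω, (0 : Ω → ℝ) ω ∂μ := integral_congr_ae h3
      _ = 0 := by simp
  have hint1 : Integrable (fun ω => (f ω - c ω) ^ 2) μ := hfc.integrable_sq
  have hint3 : Integrable (fun ω => (c ω - g ω) ^ 2) μ := hh.integrable_sq
  have hint2 : Integrable (fun ω => 2 * ((c ω - g ω) * (f ω - c ω))) μ :=
    hcross_int.const_mul 2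
  have hint23 : Integrable
      (fun ω => 2 * ((c ω - g ω) * (f ω - c ω)) + (c ω - g ω) ^ 2) μ := hint2.add hint3
  have hexp : (fun ω => (f ω - g ω) ^ 2)
      = fun ω => (f ω - c ω) ^ 2 + (2 * ((c ω - g ω) * (f ω - c ω)) + (c ω - g ω) ^ 2) := by
    funext ω; ring
  rw [hexp, integral_add hint1 hint23, integral_add hint2 hint3, integral_const_mul, hcross]
  have h4 : 0 ≤ ∫ ω, (c ω - g ω) ^ 2 ∂μ := integral_nonneg fun ω => sq_nonneg _
  linarith

/-- Conditional expectation commutes with continuous linear maps (here into ℝ). -/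
lemma condexp_clm [IsProbabilityMeasure μ] (hm : m ≤ m0)
    {E : Type*} [NormedAddCommGroup E] [NormedSpace ℝ E] [CompleteSpace E]
    {F : Ω → E} (hF : Integrable F μ) (T : E →L[ℝ] ℝ) :
    (fun ω => T ((μ[F|m]) ω)) =ᵐ[μ] μ[fun ω => T (F ω)|m] := by
  refine ae_eq_condExp_of_forall_setIntegral_eq hm (T.integrable_comp hF)
    (fun s _ _ => (T.integrable_comp integrable_condExp).integrableOn)
    (fun s hs hμs => ?_)
    ((T.continuous.comp_stronglyMeasurable stronglyMeasurable_condExp).aestronglyMeasurable)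
  rw [T.integral_comp_comm integrable_condExp.integrableOn, setIntegral_condExp hm hF hs]
  exact (T.integral_comp_comm hF.integrableOn).symm

end Helpers

section Algebra

lemma sqn_dot {n : ℕ} (v : Fin n → ℝ) : sqn v = v ⬝ᵥ v := by
  simp [sqn, dotProduct, sq]

lemma sqn_nonneg {n : ℕ} (v : Fin n → ℝ) : 0 ≤ sqn v :=
  Finset.sum_nonneg fun i _ => sq_nonneg _

lemma dot_swap {k l : ℕ} (A : Matrix (Fin k) (Fin l) ℝ) (x : Fin l → ℝ) (y : Fin k → ℝ) :
    (A *ᵥ x) ⬝ᵥ y = x ⬝ᵥ (Aᵀ *ᵥ y) := by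
  rw [dotProduct_comm, dotProduct_mulVec, mulVec_transpose, dotProduct_comm]

lemma sqn_decomp {m s : ℕ} (V : Matrix (Fin m) (Fin s) ℝ) (hV : Vᵀ * V = 1)
    (a : Fin s → ℝ) (u : Fin m → ℝ) :
    sqn (V *ᵥ a + (1 - V * Vᵀ) *ᵥ u) = sqn a + sqn ((1 - V * Vᵀ) *ᵥ u) := by
  have hperp : Vᵀ * (1 - V * Vᵀ) = 0 := by
    rw [Matrix.mul_sub, Matrix.mul_one, ← Matrix.mul_assoc, hV, Matrix.one_mul, sub_self]
  have hVa : (V *ᵥ a) ⬝ᵥ (V *ᵥ a) = a ⬝ᵥ a := by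
    rw [dot_swap, mulVec_mulVec, hV, one_mulVec]
  have hcross : (V *ᵥ a) ⬝ᵥ ((1 - V * Vᵀ) *ᵥ u) = 0 := by
    rw [dot_swap, mulVec_mulVec, hperp, zero_mulVec, dotProduct_zero]
  rw [sqn_dot, sqn_dot, sqn_dot, add_dotProduct, dotProduct_add, dotProduct_add,
    hVa, hcross, dotProduct_comm ((1 - V * Vᵀ) *ᵥ u) (V *ᵥ a), hcross]
  ring

end Algebra

/-- `G*(x) = V_s g*(U_rᵀ x) + G*_⊥`, with `g*` built from the conditional
expectation of `G(X)` given `U_rᵀ X` and `G*_⊥ = (I - V Vᵀ) E[G(X)]`, minimizes the mean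
squared error over all square-integrable reduced models `G̃(x) = V_s g̃(U_rᵀ x) + G̃_⊥`. -/
theorem optimal_reduced_model
    {d m r s : ℕ} {Ω : Type*} [MeasurableSpace Ω] (μ : Measure Ω) [IsProbabilityMeasure μ]
    (X : Ω → (Fin d → ℝ)) (hX : Measurable X)
    (G : (Fin d → ℝ) → (Fin m → ℝ)) (hGmeas : Measurable G)
    (hGL2 : Integrable (fun ω => sqn (G (X ω))) μ)
    (U : Matrix (Fin d) (Fin r) ℝ) (hU : Uᵀ * U = 1)
    (V : Matrix (Fin m) (Fin s) ℝ) (hV : Vᵀ * V = 1)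
    -- the optimal reduced model G*
    (Gstar : Ω → (Fin m → ℝ))
    (hGstar : Gstar = fun ω =>
      (V * Vᵀ).mulVec
        ((μ[(fun ω' => G (X ω')) | MeasurableSpace.comap (fun ω' => Uᵀ.mulVec (X ω')) inferInstance]) ω)
      + ((1 : Matrix (Fin m) (Fin m) ℝ) - V * Vᵀ).mulVec (∫ ω', G (X ω') ∂μ)) :
    -- G* minimizes the L² error among all reduced models of the prescribed form
    ∀ (gt : (Fin r → ℝ) → (Fin s → ℝ)) (Gperp : Fin m → ℝ),
      Measurable gt →
      Integrable (fun ω => sqn (G (X ω) - (V.mulVec (gt (Uᵀ.mulVec (X ω))) + Gperp))) μ →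
      ∫ ω, sqn (G (X ω) - Gstar ω) ∂μ
        ≤ ∫ ω, sqn (G (X ω) - (V.mulVec (gt (Uᵀ.mulVec (X ω))) + Gperp)) ∂μ := by
  intro gt Gperp hgt hint
  subst hGstar
  set Z : Ω → (Fin r → ℝ) := fun ω' => Uᵀ.mulVec (X ω') with hZdef
  have hZmeas : Measurable Z :=
    ((Matrix.mulVecLin Uᵀ).continuous_of_finiteDimensional).measurable.comp hX
  have hmle : MeasurableSpace.comap Z inferInstance ≤ (inferInstance : MeasurableSpace Ω) :=
    hZmeas.comap_le
  set CE : Ω → (Fin m → ℝ) := μ[(fun ω' => G (X ω')) | MeasurableSpace.comap Z inferInstance] with hCEdef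
  set EH : Fin m → ℝ := ∫ ω', G (X ω') ∂μ with hEHdef
  -- basic componentwise facts
  have hsq_bound : ∀ (v : Fin m → ℝ) (i : Fin m), (v i) ^ 2 ≤ sqn v := fun v i =>
    Finset.single_le_sum (f := fun j => (v j) ^ 2) (fun j _ => sq_nonneg _) (Finset.mem_univ i)
  have hHi : ∀ i, MemLp (fun ω => G (X ω) i) 2 μ := by
    intro i
    have hm1 : Measurable (fun ω => G (X ω) i) := (measurable_pi_apply i).comp (hGmeas.comp hX)
    refine (memLp_two_iff_integrable_sq hm1.aestronglyMeasurable).mpr ?_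
    refine hGL2.mono' ((hm1.pow_const 2).aestronglyMeasurable) (Filter.Eventually.of_forall fun ω => ?_)
    rw [Real.norm_eq_abs, abs_of_nonneg (sq_nonneg _)]
    exact hsq_bound _ i
  have hHint : Integrable (fun ω' => G (X ω')) μ := by
    have haesm : AEStronglyMeasurable (fun ω' => G (X ω')) μ := (hGmeas.comp hX).aestronglyMeasurable
    refine ((memLp_two_iff_integrable_sq_norm haesm).mpr ?_).integrable one_le_two
    refine hGL2.mono' (((hGmeas.comp hX).norm.pow_const 2).aestronglyMeasurable)
      (Filter.Eventually.of_forall fun ω => ?_)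
    rw [Real.norm_eq_abs, abs_of_nonneg (sq_nonneg _)]
    have h1 : ‖G (X ω)‖ ≤ Real.sqrt (sqn (G (X ω))) := by
      refine (pi_norm_le_iff_of_nonneg (Real.sqrt_nonneg _)).mpr fun i => ?_
      rw [Real.norm_eq_abs, ← Real.sqrt_sq_eq_abs]
      exact Real.sqrt_le_sqrt (hsq_bound _ i)
    calc ‖G (X ω)‖ ^ 2 ≤ Real.sqrt (sqn (G (X ω))) ^ 2 :=
          pow_le_pow_left₀ (norm_nonneg _) h1 2
      _ = sqn (G (X ω)) := Real.sq_sqrt (sqn_nonneg _)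
  have hDi : ∀ i, MemLp (fun ω => (G (X ω) - (V *ᵥ gt (Z ω) + Gperp)) i) 2 μ := by
    intro i
    have hDmeas : Measurable (fun ω => G (X ω) - (V *ᵥ gt (Z ω) + Gperp)) :=
      (hGmeas.comp hX).sub
        ((((Matrix.mulVecLin V).continuous_of_finiteDimensional).measurable.comp
          (hgt.comp hZmeas)).add measurable_const)
    have hm1 : Measurable (fun ω => (G (X ω) - (V *ᵥ gt (Z ω) + Gperp)) i) :=
      (measurable_pi_apply i).comp hDmeas
    refine (memLp_two_iff_integrable_sq hm1.aestronglyMeasurable).mpr ?_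
    refine hint.mono' ((hm1.pow_const 2).aestronglyMeasurable)
      (Filter.Eventually.of_forall fun ω => ?_)
    rw [Real.norm_eq_abs, abs_of_nonneg (sq_nonneg _)]
    exact hsq_bound _ i
  have hMcomp : ∀ {k : ℕ} (M : Matrix (Fin k) (Fin m) ℝ) (j : Fin k) (F : Ω → Fin m → ℝ),
      (∀ i, MemLp (fun ω => F ω i) 2 μ) → MemLp (fun ω => (M *ᵥ F ω) j) 2 μ := by
    intro k M j F hF
    have h1 : (fun ω => (M *ᵥ F ω) j) = fun ω => ∑ i, M j i * F ω i := rfl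
    rw [h1]
    exact memLp_finsetSum Finset.univ (fun i _ => (hF i).const_mul (M j i))
  have hfj : ∀ j : Fin s, MemLp (fun ω => (Vᵀ *ᵥ G (X ω)) j) 2 μ :=
    fun j => hMcomp Vᵀ j _ hHi
  have hki : ∀ i : Fin m, MemLp (fun ω => ((1 - V * Vᵀ) *ᵥ G (X ω)) i) 2 μ :=
    fun i => hMcomp _ i _ hHi
  have hgj : ∀ j : Fin s, MemLp (fun ω => gt (Z ω) j + (Vᵀ *ᵥ Gperp) j) 2 μ := by
    intro j
    have h1 := hMcomp Vᵀ j _ hDi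
    have h2 := (hfj j).sub h1
    have h3 : (fun ω => (Vᵀ *ᵥ G (X ω)) j - (Vᵀ *ᵥ (G (X ω) - (V *ᵥ gt (Z ω) + Gperp))) j)
        = fun ω => gt (Z ω) j + (Vᵀ *ᵥ Gperp) j := by
      funext ω
      have h4 : Vᵀ *ᵥ (G (X ω) - (V *ᵥ gt (Z ω) + Gperp))
          = Vᵀ *ᵥ G (X ω) - (gt (Z ω) + Vᵀ *ᵥ Gperp) := by
        simp only [Matrix.mulVec_sub, Matrix.mulVec_add, Matrix.mulVec_mulVec, hV,
          Matrix.one_mulVec]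
      rw [h4]
      simp only [Pi.sub_apply, Pi.add_apply]
      ring
    exact h3 ▸ h2
  -- conditional expectation commutes with the linear maps
  have hcond : ∀ j : Fin s, (fun ω => (Vᵀ *ᵥ CE ω) j)
      =ᵐ[μ] μ[(fun ω => (Vᵀ *ᵥ G (X ω)) j) | MeasurableSpace.comap Z inferInstance] := by
    intro j
    exact condexp_clm hmle hHint
      (LinearMap.toContinuousLinearMap ((LinearMap.proj j).comp (Matrix.mulVecLin Vᵀ)))
  have hmean : ∀ i : Fin m, ((1 - V * Vᵀ) *ᵥ EH) i
      = ∫ ω, ((1 - V * Vᵀ) *ᵥ G (X ω)) i ∂μ := by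
    intro i
    exact ((LinearMap.toContinuousLinearMap
      ((LinearMap.proj i).comp (Matrix.mulVecLin (1 - V * Vᵀ)))).integral_comp_comm hHint).symm
  -- pointwise decompositions
  have hvecR : ∀ ω, G (X ω) - (V *ᵥ gt (Z ω) + Gperp)
      = V *ᵥ (Vᵀ *ᵥ G (X ω) - (gt (Z ω) + Vᵀ *ᵥ Gperp))
        + (1 - V * Vᵀ) *ᵥ (G (X ω) - Gperp) := by
    intro ω
    simp only [Matrix.mulVec_sub, Matrix.mulVec_add, Matrix.sub_mulVec, Matrix.mulVec_mulVec,
      Matrix.one_mulVec]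
    abel
  have hidR : ∀ ω, sqn (G (X ω) - (V *ᵥ gt (Z ω) + Gperp))
      = (∑ j, ((Vᵀ *ᵥ G (X ω)) j - (gt (Z ω) j + (Vᵀ *ᵥ Gperp) j)) ^ 2)
        + ∑ i, (((1 - V * Vᵀ) *ᵥ G (X ω)) i - ((1 - V * Vᵀ) *ᵥ Gperp) i) ^ 2 := by
    intro ω
    rw [hvecR ω, sqn_decomp V hV, Matrix.mulVec_sub]
    simp [sqn]
  have hvecL : ∀ ω, G (X ω) - ((V * Vᵀ) *ᵥ CE ω + (1 - V * Vᵀ) *ᵥ EH)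
      = V *ᵥ (Vᵀ *ᵥ G (X ω) - Vᵀ *ᵥ CE ω) + (1 - V * Vᵀ) *ᵥ (G (X ω) - EH) := by
    intro ω
    simp only [Matrix.mulVec_sub, Matrix.sub_mulVec, Matrix.mulVec_mulVec, Matrix.one_mulVec]
    abel
  have hidL : ∀ ω, sqn (G (X ω) - ((V * Vᵀ) *ᵥ CE ω + (1 - V * Vᵀ) *ᵥ EH))
      = (∑ j, ((Vᵀ *ᵥ G (X ω)) j - (Vᵀ *ᵥ CE ω) j) ^ 2)
        + ∑ i, (((1 - V * Vᵀ) *ᵥ G (X ω)) i - ((1 - V * Vᵀ) *ᵥ EH) i) ^ 2 := by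
    intro ω
    rw [hvecL ω, sqn_decomp V hV, Matrix.mulVec_sub]
    simp [sqn]
  -- splitting integrals
  have hsplit : ∀ (F1 : Fin s → Ω → ℝ) (F2 : Fin m → Ω → ℝ),
      (∀ j, Integrable (F1 j) μ) → (∀ i, Integrable (F2 i) μ) →
      ∫ ω, ((∑ j, F1 j ω) + ∑ i, F2 i ω) ∂μ
        = (∑ j, ∫ ω, F1 j ω ∂μ) + ∑ i, ∫ ω, F2 i ω ∂μ := by
    intro F1 F2 h1 h2
    rw [integral_add (integrable_finset_sum _ fun j _ => h1 j)
      (integrable_finset_sum _ fun i _ => h2 i), integral_finset_sum _ (fun j _ => h1 j),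
      integral_finset_sum _ (fun i _ => h2 i)]
  have hcfj : ∀ j : Fin s, MemLp (μ[(fun ω => (Vᵀ *ᵥ G (X ω)) j) | MeasurableSpace.comap Z inferInstance]) 2 μ :=
    fun j => memℒp_two_condexp hmle (hfj j)
  have hRHS : ∫ ω, sqn (G (X ω) - (V *ᵥ gt (Z ω) + Gperp)) ∂μ
      = (∑ j, ∫ ω, ((Vᵀ *ᵥ G (X ω)) j - (gt (Z ω) j + (Vᵀ *ᵥ Gperp) j)) ^ 2 ∂μ)
        + ∑ i, ∫ ω, (((1 - V * Vᵀ) *ᵥ G (X ω)) i - ((1 - V * Vᵀ) *ᵥ Gperp) i) ^ 2 ∂μ := by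
    simp only [hidR]
    exact hsplit _ _ (fun j => ((hfj j).sub (hgj j)).integrable_sq)
      (fun i => ((hki i).sub (memLp_const _)).integrable_sq)
  have hLHS : ∫ ω, sqn (G (X ω) - ((V * Vᵀ) *ᵥ CE ω + (1 - V * Vᵀ) *ᵥ EH)) ∂μ
      = (∑ j, ∫ ω, ((Vᵀ *ᵥ G (X ω)) j - (μ[(fun ω => (Vᵀ *ᵥ G (X ω)) j) | MeasurableSpace.comap Z inferInstance]) ω) ^ 2 ∂μ)
        + ∑ i, ∫ ω, (((1 - V * Vᵀ) *ᵥ G (X ω)) i - ((1 - V * Vᵀ) *ᵥ EH) i) ^ 2 ∂μ := by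
    have hall : ∀ᵐ ω ∂μ, ∀ j : Fin s,
        (Vᵀ *ᵥ CE ω) j = (μ[(fun ω => (Vᵀ *ᵥ G (X ω)) j) | MeasurableSpace.comap Z inferInstance]) ω := ae_all_iff.mpr hcond
    have hae : (fun ω => sqn (G (X ω) - ((V * Vᵀ) *ᵥ CE ω + (1 - V * Vᵀ) *ᵥ EH))) =ᵐ[μ]
        fun ω => (∑ j, ((Vᵀ *ᵥ G (X ω)) j - (μ[(fun ω => (Vᵀ *ᵥ G (X ω)) j) | MeasurableSpace.comap Z inferInstance]) ω) ^ 2)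
          + ∑ i, (((1 - V * Vᵀ) *ᵥ G (X ω)) i - ((1 - V * Vᵀ) *ᵥ EH) i) ^ 2 := by
      filter_upwards [hall] with ω hω
      rw [hidL ω]
      congr 1
      exact Finset.sum_congr rfl fun j _ => by rw [hω j]
    rw [integral_congr_ae hae]
    exact hsplit _ _ (fun j => ((hfj j).sub (hcfj j)).integrable_sq)
      (fun i => ((hki i).sub (memLp_const _)).integrable_sq)
  -- componentwise comparison
  have hcomp1 : ∀ j : Fin s,
      ∫ ω, ((Vᵀ *ᵥ G (X ω)) j - (μ[(fun ω => (Vᵀ *ᵥ G (X ω)) j) | MeasurableSpace.comap Z inferInstance]) ω) ^ 2 ∂μ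
        ≤ ∫ ω, ((Vᵀ *ᵥ G (X ω)) j - (gt (Z ω) j + (Vᵀ *ᵥ Gperp) j)) ^ 2 ∂μ := by
    intro j
    refine condexp_L2_min hmle (hfj j) (hgj j) ?_
    have hZm : Measurable[MeasurableSpace.comap Z inferInstance] Z :=
      Measurable.of_comap_le le_rfl
    exact (Measurable.stronglyMeasurable
      ((((measurable_pi_apply j).comp hgt).add_const _).comp hZm))
  have hcomp2 : ∀ i : Fin m,
      ∫ ω, (((1 - V * Vᵀ) *ᵥ G (X ω)) i - ((1 - V * Vᵀ) *ᵥ EH) i) ^ 2 ∂μ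
        ≤ ∫ ω, (((1 - V * Vᵀ) *ᵥ G (X ω)) i - ((1 - V * Vᵀ) *ᵥ Gperp) i) ^ 2 ∂μ := by
    intro i
    have h := condexp_L2_min (μ := μ) (m := ⊥) bot_le (hki i)
      (memLp_const (((1 - V * Vᵀ) *ᵥ Gperp) i)) stronglyMeasurable_const
    rw [condExp_bot] at h
    rw [hmean i]
    exact h
  calc ∫ ω, sqn (G (X ω) - ((V * Vᵀ) *ᵥ CE ω + (1 - V * Vᵀ) *ᵥ EH)) ∂μ
      = _ := hLHS
    _ ≤ _ := add_le_add (Finset.sum_le_sum fun j _ => hcomp1 j)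
        (Finset.sum_le_sum fun i _ => hcomp2 i)
    _ = ∫ ω, sqn (G (X ω) - (V *ᵥ gt (Z ω) + Gperp)) ∂μ := hRHS.symm
end
end

section
/- With G* defined as the optimal reduced model (G*(x) = V_s V_s^T E[G(X)|U_r^T X = U_r^T x] + (I_m − V_s V_s^T) E[G(X)]), the minimal error satisfies E[‖G(X) − G*(X)‖²] = Tr(Cov(G(X))) − Tr(V_s^T Cov(E[G(X) | U_r^T X]) V_s). -/
noncomputable section
open MeasureTheory Matrix

/-- Covariance matrix of a square-integrable random vector. -/
def covMatrix {n : ℕ} {Ω : Type*} [MeasurableSpace Ω] (μ : Measure Ω)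
    (Z : Ω → (Fin n → ℝ)) : Matrix (Fin n) (Fin n) ℝ :=
  Matrix.of fun i j =>
    ∫ ω, (Z ω i - ∫ ω', Z ω' i ∂μ) * (Z ω j - ∫ ω', Z ω' j ∂μ) ∂μ

theorem L2prod' {Ω : Type*} {m0 : MeasurableSpace Ω} {μ : Measure Ω} {a b : Ω → ℝ}
    (ha : MemLp a 2 μ) (hb : MemLp b 2 μ) :
    Integrable (fun ω => a ω * b ω) μ := by
  have h := hb.smul (φ := a) ha (r := 1)
  rw [memLp_one_iff_integrable] at h
  exact h

theorem memℒp_two_condexp' {Ω' : Type*} {m m0 : MeasurableSpace Ω'} {μ : Measure Ω'} (hm : m ≤ m0)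
    [IsFiniteMeasure μ] {u : Ω' → ℝ} (hu : MemLp u 2 μ) :
    MemLp (μ[u|m]) 2 μ := by
  have key : (↑↑(condExpL2 (μ := μ) ℝ ℝ hm (hu.toLp u)) : Ω' → ℝ) =ᵐ[μ] μ[u|m] := by
    refine ae_eq_condExp_of_forall_setIntegral_eq hm (hu.integrable one_le_two)
      (fun s hs hμs => ?_) (fun s hs hμs => ?_) ?_
    · exact integrableOn_Lp_of_measure_ne_top _ fact_one_le_two_ennreal.elim hμs.ne
    · rw [integral_condExpL2_eq hm (hu.toLp u) hs hμs.ne]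
      exact setIntegral_congr_ae (hm s hs) ((hu.coeFn_toLp).mono fun x hx _ => hx)
    · exact aestronglyMeasurable_condExpL2 hm _
  exact (Lp.memLp _).ae_eq key

theorem expand_sq_integral {Ω : Type*} {m0 : MeasurableSpace Ω} {μ : Measure Ω} {n : ℕ}
    {a : Ω → ℝ} {g : Fin n → Ω → ℝ} (w : Fin n → ℝ)
    (ha : MemLp a 2 μ) (hg : ∀ j, MemLp (g j) 2 μ) :
    ∫ ω, (a ω - ∑ j, w j * g j ω)^2 ∂μ
      = ∫ ω, (a ω)^2 ∂μ - 2 * ∑ j, w j * ∫ ω, a ω * g j ω ∂μ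
        + ∑ j, ∑ k, w j * w k * ∫ ω, g j ω * g k ω ∂μ := by
  set q : Ω → ℝ := fun ω => ∑ j, w j * g j ω with hq_def
  have hq : MemLp q 2 μ :=
    memLp_finset_sum Finset.univ (fun j _ => (hg j).const_mul (w j))
  have h1 : Integrable (fun ω => (a ω)^2) μ := by
    simpa [sq] using L2prod' ha ha
  have h2 : Integrable (fun ω => a ω * q ω) μ := L2prod' ha hq
  have h3 : Integrable (fun ω => (q ω)^2) μ := by
    simpa [sq] using L2prod' hq hq
  have key : ∫ ω, (a ω - q ω)^2 ∂μ
      = ∫ ω, (a ω)^2 ∂μ - 2 * ∫ ω, a ω * q ω ∂μ + ∫ ω, (q ω)^2 ∂μ := by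
    have hfe : (fun ω => (a ω - q ω)^2)
        = fun ω => ((a ω)^2 - 2 * (a ω * q ω)) + (q ω)^2 := by
      funext ω; ring
    have h4 : Integrable (fun ω => (a ω)^2 - 2 * (a ω * q ω)) μ := h1.sub (h2.const_mul 2)
    rw [hfe, integral_add h4 h3, integral_sub h1 (h2.const_mul 2), integral_const_mul]
  have haq : ∫ ω, a ω * q ω ∂μ = ∑ j, w j * ∫ ω, a ω * g j ω ∂μ := by
    have hfe : (fun ω => a ω * q ω) = fun ω => ∑ j, w j * (a ω * g j ω) := by
      funext ω; rw [hq_def, Finset.mul_sum]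
      exact Finset.sum_congr rfl fun j _ => by ring
    rw [hfe, integral_finset_sum _ (fun j _ => (L2prod' ha (hg j)).const_mul (w j))]
    exact Finset.sum_congr rfl fun j _ => integral_const_mul _ _
  have hqq : ∫ ω, (q ω)^2 ∂μ = ∑ j, ∑ k, w j * w k * ∫ ω, g j ω * g k ω ∂μ := by
    have hfe : (fun ω => (q ω)^2)
        = fun ω => ∑ j, ∑ k, (w j * w k) * (g j ω * g k ω) := by
      funext ω; rw [hq_def, sq, Finset.sum_mul_sum]
      exact Finset.sum_congr rfl fun j _ => Finset.sum_congr rfl fun k _ => by ring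
    rw [hfe, integral_finset_sum _ (fun j _ => integrable_finset_sum _
      (fun k _ => (L2prod' (hg j) (hg k)).const_mul _))]
    exact Finset.sum_congr rfl fun j _ => by
      rw [integral_finset_sum _ (fun k _ => (L2prod' (hg j) (hg k)).const_mul _)]
      exact Finset.sum_congr rfl fun k _ => integral_const_mul _ _
  rw [key, haq, hqq]

/-- the minimal error of the optimal reduced model satisfies
`E‖G(X) − G*(X)‖² = Tr(Cov(G(X))) − Tr(V_sᵀ Cov(E[G(X)|U_rᵀX]) V_s)`. -/
theorem optimal_reduced_model_error_decomposition
    {d m r s : ℕ} {Ω : Type*} [MeasurableSpace Ω] (μ : Measure Ω) [IsProbabilityMeasure μ]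
    (X : Ω → (Fin d → ℝ)) (hX : Measurable X)
    (G : (Fin d → ℝ) → (Fin m → ℝ)) (hGmeas : Measurable G)
    (hGL2 : Integrable (fun ω => sqn (G (X ω))) μ)
    (U : Matrix (Fin d) (Fin r) ℝ) (hU : Uᵀ * U = 1)
    (V : Matrix (Fin m) (Fin s) ℝ) (hV : Vᵀ * V = 1)
    (condG : Ω → (Fin m → ℝ))
    (hcondG : condG =
      μ[(fun ω' => G (X ω')) | MeasurableSpace.comap (fun ω' => Uᵀ.mulVec (X ω')) inferInstance])
    (Gstar : Ω → (Fin m → ℝ))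
    (hGstar : Gstar = fun ω =>
      (V * Vᵀ).mulVec (condG ω)
      + ((1 : Matrix (Fin m) (Fin m) ℝ) - V * Vᵀ).mulVec (∫ ω', G (X ω') ∂μ)) :
    ∫ ω, sqn (G (X ω) - Gstar ω) ∂μ
      = (covMatrix μ (fun ω => G (X ω))).trace
        - (Vᵀ * covMatrix μ condG * V).trace := by
  -- basic setup
  set Y : Ω → (Fin m → ℝ) := fun ω => G (X ω) with hY_def
  have hTmeas : Measurable (fun ω => Uᵀ.mulVec (X ω)) := by
    refine measurable_pi_lambda _ fun i => ?_
    simp only [Matrix.mulVec, dotProduct]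
    exact Finset.measurable_sum _ fun j _ => ((measurable_pi_apply j).comp hX).const_mul _
  have hm : MeasurableSpace.comap (fun ω' => Uᵀ.mulVec (X ω')) inferInstance
      ≤ ‹MeasurableSpace Ω› := hTmeas.comap_le
  haveI : SigmaFinite (μ.trim hm) := by
    haveI := isFiniteMeasure_trim hm (μ := μ)
    infer_instance
  -- componentwise measurability and L2
  have hYmeas : ∀ i, Measurable (fun ω => Y ω i) :=
    fun i => (measurable_pi_apply i).comp (hGmeas.comp hX)
  have hYL2 : ∀ i, MemLp (fun ω => Y ω i) 2 μ := by
    intro i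
    refine (memLp_two_iff_integrable_sq (hYmeas i).aestronglyMeasurable).mpr ?_
    refine hGL2.mono' ((hYmeas i).pow_const 2).aestronglyMeasurable ?_
    refine ae_of_all _ fun ω => ?_
    rw [Real.norm_eq_abs, abs_of_nonneg (sq_nonneg _)]
    exact Finset.single_le_sum (fun j _ => sq_nonneg (Y ω j)) (Finset.mem_univ i)
  have hYint : ∀ i, Integrable (fun ω => Y ω i) μ := fun i => (hYL2 i).integrable one_le_two
  have hYvecInt : Integrable Y μ := by
    refine Integrable.mono' (g := fun ω => ∑ i, |Y ω i|)
      (integrable_finset_sum _ fun i _ => (hYint i).abs)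
      (hGmeas.comp hX).aestronglyMeasurable ?_
    refine ae_of_all _ fun ω => ?_
    refine (pi_norm_le_iff_of_nonneg (Finset.sum_nonneg fun i _ => abs_nonneg _)).mpr fun i => ?_
    exact Finset.single_le_sum (fun j _ => abs_nonneg (Y ω j)) (Finset.mem_univ i)
  -- means
  set c : Fin m → ℝ := fun i => ∫ ω, Y ω i ∂μ with hc_def
  have hvecmean : ∀ i, (∫ ω', Y ω' ∂μ) i = c i := by
    intro i
    have := (ContinuousLinearMap.proj (R := ℝ) (φ := fun _ : Fin m => ℝ) i).integral_comp_comm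
      hYvecInt
    simpa using this.symm
  -- conditional expectation properties
  have hcondG_sm : StronglyMeasurable[MeasurableSpace.comap
      (fun ω' => Uᵀ.mulVec (X ω')) inferInstance] condG := hcondG ▸ stronglyMeasurable_condExp
  have hcondG_int : Integrable condG μ := hcondG ▸ integrable_condExp
  have hcondG_i_sm : ∀ i, StronglyMeasurable[MeasurableSpace.comap
      (fun ω' => Uᵀ.mulVec (X ω')) inferInstance] (fun ω => condG ω i) :=
    fun i => (continuous_apply i).comp_stronglyMeasurable hcondG_sm
  have hcondG_i_aesm : ∀ i, AEStronglyMeasurable (fun ω => condG ω i) μ :=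
    fun i => ((hcondG_i_sm i).mono hm).aestronglyMeasurable
  have hcondG_i_int : ∀ i, Integrable (fun ω => condG ω i) μ := by
    intro i
    refine hcondG_int.norm.mono' (hcondG_i_aesm i) ?_
    exact ae_of_all _ fun ω => by
      simpa using norm_le_pi_norm (condG ω) i
  have hcomp : ∀ i, (fun ω => condG ω i)
      =ᵐ[μ] μ[(fun ω => Y ω i)|MeasurableSpace.comap (fun ω' => Uᵀ.mulVec (X ω')) inferInstance] := by
    intro i
    refine ae_eq_condExp_of_forall_setIntegral_eq hm (hYint i)
      (fun t ht hμt => (hcondG_i_int i).integrableOn)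
      (fun t ht hμt => ?_)
      ((hcondG_i_sm i).aestronglyMeasurable)
    have h1 : ∫ ω in t, condG ω i ∂μ
        = (ContinuousLinearMap.proj (R := ℝ) (φ := fun _ : Fin m => ℝ) i)
            (∫ ω in t, condG ω ∂μ) := by
      have := (ContinuousLinearMap.proj (R := ℝ) (φ := fun _ : Fin m => ℝ) i).integral_comp_comm
        (hcondG_int.integrableOn (s := t))
      simpa using this
    have h2 : ∫ ω in t, condG ω ∂μ = ∫ ω in t, Y ω ∂μ := by
      rw [hcondG]; exact setIntegral_condExp hm hYvecInt ht
    have h3 : ∫ ω in t, Y ω i ∂μ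
        = (ContinuousLinearMap.proj (R := ℝ) (φ := fun _ : Fin m => ℝ) i)
            (∫ ω in t, Y ω ∂μ) := by
      have := (ContinuousLinearMap.proj (R := ℝ) (φ := fun _ : Fin m => ℝ) i).integral_comp_comm
        (hYvecInt.integrableOn (s := t))
      simpa using this
    rw [h1, h2, h3]
  have hcondG_i_L2 : ∀ i, MemLp (fun ω => condG ω i) 2 μ :=
    fun i => (memℒp_two_condexp' hm (hYL2 i)).ae_eq (hcomp i).symm
  have hmeanCond : ∀ i, ∫ ω, condG ω i ∂μ = c i := by
    intro i
    rw [integral_congr_ae (hcomp i), integral_condExp hm]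
  -- centered functions
  set f : Fin m → Ω → ℝ := fun i ω => Y ω i - c i with hf_def
  set g : Fin m → Ω → ℝ := fun i ω => condG ω i - c i with hg_def
  have hfL2 : ∀ i, MemLp (f i) 2 μ := fun i => (hYL2 i).sub (memLp_const (c i))
  have hgL2 : ∀ i, MemLp (g i) 2 μ := fun i => (hcondG_i_L2 i).sub (memLp_const (c i))
  have hg_sm : ∀ i, StronglyMeasurable[MeasurableSpace.comap
      (fun ω' => Uᵀ.mulVec (X ω')) inferInstance] (g i) :=
    fun i => (hcondG_i_sm i).sub stronglyMeasurable_const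
  set M : Fin m → Fin m → ℝ := fun j k => ∫ ω, g j ω * g k ω ∂μ with hM_def
  -- conditional expectation of f i
  have hfe : ∀ i, μ[f i|MeasurableSpace.comap (fun ω' => Uᵀ.mulVec (X ω')) inferInstance]
      =ᵐ[μ] g i := by
    intro i
    have h0 : f i = (fun ω => Y ω i) - fun _ => c i := rfl
    have h1 : μ[f i|MeasurableSpace.comap (fun ω' => Uᵀ.mulVec (X ω')) inferInstance]
        =ᵐ[μ] μ[(fun ω => Y ω i)|MeasurableSpace.comap (fun ω' => Uᵀ.mulVec (X ω')) inferInstance]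
          - μ[(fun _ : Ω => c i)|MeasurableSpace.comap
              (fun ω' => Uᵀ.mulVec (X ω')) inferInstance] := by
      rw [h0]; exact condExp_sub (hYint i) (integrable_const (c i)) _
    have h2 : μ[(fun _ : Ω => c i)|MeasurableSpace.comap
        (fun ω' => Uᵀ.mulVec (X ω')) inferInstance] = fun _ => c i := condExp_const hm _
    filter_upwards [h1, hcomp i] with ω hω1 hω2
    simp only [hg_def]
    rw [hω1, h2]
    simp only [Pi.sub_apply]
    rw [hω2]
  -- cross terms
  have crossEq : ∀ i j, ∫ ω, f i ω * g j ω ∂μ = M i j := by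
    intro i j
    have hmul : Integrable ((g j) * (f i)) μ := by
      have := L2prod' (hgL2 j) (hfL2 i)
      exact this
    have hpull : μ[(g j) * (f i)|MeasurableSpace.comap
          (fun ω' => Uᵀ.mulVec (X ω')) inferInstance]
        =ᵐ[μ] (g j) * μ[f i|MeasurableSpace.comap
          (fun ω' => Uᵀ.mulVec (X ω')) inferInstance] :=
      condExp_mul_of_stronglyMeasurable_left (hg_sm j) hmul ((hfL2 i).integrable one_le_two)
    have step1 : ∫ ω, f i ω * g j ω ∂μ = ∫ ω, ((g j) * (f i)) ω ∂μ := by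
      congr 1; funext ω; simp [Pi.mul_apply, mul_comm]
    rw [step1, ← integral_condExp hm (f := (g j) * (f i)), integral_congr_ae hpull]
    have step2 : ∫ ω, ((g j) * μ[f i|MeasurableSpace.comap
        (fun ω' => Uᵀ.mulVec (X ω')) inferInstance]) ω ∂μ = ∫ ω, g i ω * g j ω ∂μ := by
      refine integral_congr_ae ?_
      filter_upwards [hfe i] with ω hω
      simp only [Pi.mul_apply, hω]
      ring
    rw [step2, hM_def]
  -- pointwise identity of the integrand
  set P : Matrix (Fin m) (Fin m) ℝ := V * Vᵀ with hP_def
  have hpt : ∀ ω, sqn (Y ω - Gstar ω) = ∑ i, (f i ω - ∑ j, P i j * g j ω)^2 := by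
    intro ω
    unfold sqn
    refine Finset.sum_congr rfl fun i _ => ?_
    have hGs : Gstar ω i = (∑ j, P i j * condG ω j) + (c i - ∑ j, P i j * c j) := by
      have hYc : integral μ Y = c := funext hvecmean
      simp only [hGstar, hYc, Pi.add_apply, Matrix.sub_mulVec, Matrix.one_mulVec, Pi.sub_apply,
        Matrix.mulVec, dotProduct]
    have hcoor : (Y ω - Gstar ω) i = f i ω - ∑ j, P i j * g j ω := by
      rw [Pi.sub_apply, hGs]
      simp only [hf_def, hg_def, mul_sub, Finset.sum_sub_distrib]
      ring
    rw [hcoor]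
  -- integrate
  have hsplit : ∫ ω, sqn (Y ω - Gstar ω) ∂μ
      = ∑ i, ∫ ω, (f i ω - ∑ j, P i j * g j ω)^2 ∂μ := by
    rw [integral_congr_ae (ae_of_all _ hpt)]
    refine integral_finset_sum _ fun i _ => ?_
    have hdiff : MemLp (fun ω => f i ω - ∑ j, P i j * g j ω) 2 μ :=
      (hfL2 i).sub (memLp_finset_sum Finset.univ fun j _ => (hgL2 j).const_mul (P i j))
    simpa [sq] using L2prod' hdiff hdiff
  have hexp : ∀ i, ∫ ω, (f i ω - ∑ j, P i j * g j ω)^2 ∂μ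
      = ∫ ω, (f i ω)^2 ∂μ - 2 * ∑ j, P i j * M i j
        + ∑ j, ∑ k, P i j * P i k * M j k := by
    intro i
    rw [expand_sq_integral (fun j => P i j) (hfL2 i) hgL2]
    congr 1
    congr 1
    congr 1
    exact Finset.sum_congr rfl fun j _ => by rw [crossEq i j]
  -- algebra with traces
  have hPP : ∀ j k, (∑ i, P i j * P i k) = P j k := by
    intro j k
    have h : Pᵀ * P = P := by
      rw [hP_def, Matrix.transpose_mul, Matrix.transpose_transpose, Matrix.mul_assoc,
        ← Matrix.mul_assoc Vᵀ V Vᵀ, hV, Matrix.one_mul]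
    have := congrFun (congrFun h j) k
    simpa [Matrix.mul_apply, Matrix.transpose_apply] using this
  have hT3 : (∑ i, ∑ j, ∑ k, P i j * P i k * M j k) = ∑ j, ∑ k, P j k * M j k := by
    rw [Finset.sum_comm]
    refine Finset.sum_congr rfl fun j _ => ?_
    rw [Finset.sum_comm]
    refine Finset.sum_congr rfl fun k _ => ?_
    rw [← Finset.sum_mul, hPP j k]
  have htraceY : (covMatrix μ Y).trace = ∑ i, ∫ ω, (f i ω)^2 ∂μ := by
    unfold Matrix.trace covMatrix
    refine Finset.sum_congr rfl fun i _ => ?_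
    simp only [Matrix.diag_apply, Matrix.of_apply]
    congr 1; funext ω; rw [sq]
  have htraceC : (Vᵀ * covMatrix μ condG * V).trace = ∑ j, ∑ k, P j k * M j k := by
    have hcov : ∀ j k, covMatrix μ condG j k = M j k := by
      intro j k
      unfold covMatrix
      simp only [Matrix.of_apply, hM_def, hg_def]
      rw [hmeanCond j, hmeanCond k]
    have h1 : (Vᵀ * covMatrix μ condG * V).trace
        = ∑ a : Fin s, ∑ k : Fin m, ∑ j : Fin m, V j a * M j k * V k a := by
      unfold Matrix.trace
      refine Finset.sum_congr rfl fun a _ => ?_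
      simp only [Matrix.diag_apply, Matrix.mul_apply, Matrix.transpose_apply, Finset.sum_mul]
      exact Finset.sum_congr rfl fun k _ => Finset.sum_congr rfl fun j _ => by rw [hcov j k]
    have h2 : (∑ j, ∑ k, P j k * M j k)
        = ∑ j : Fin m, ∑ k : Fin m, ∑ a : Fin s, V j a * M j k * V k a := by
      refine Finset.sum_congr rfl fun j _ => Finset.sum_congr rfl fun k _ => ?_
      rw [hP_def]
      simp only [Matrix.mul_apply, Matrix.transpose_apply, Finset.sum_mul]
      exact Finset.sum_congr rfl fun a _ => by ring
    rw [h1, h2]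
    calc (∑ a : Fin s, ∑ k : Fin m, ∑ j : Fin m, V j a * M j k * V k a)
        = ∑ k : Fin m, ∑ a : Fin s, ∑ j : Fin m, V j a * M j k * V k a := Finset.sum_comm
      _ = ∑ k : Fin m, ∑ j : Fin m, ∑ a : Fin s, V j a * M j k * V k a :=
          Finset.sum_congr rfl fun k _ => Finset.sum_comm
      _ = ∑ j : Fin m, ∑ k : Fin m, ∑ a : Fin s, V j a * M j k * V k a := Finset.sum_comm
  -- final assembly
  have h2T : (∑ i, 2 * ∑ j, P i j * M i j) = 2 * ∑ i, ∑ j, P i j * M i j :=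
    (Finset.mul_sum _ _ _).symm
  calc ∫ ω, sqn (Y ω - Gstar ω) ∂μ
      = ∑ i, ∫ ω, (f i ω - ∑ j, P i j * g j ω)^2 ∂μ := hsplit
    _ = ∑ i, (∫ ω, (f i ω)^2 ∂μ - 2 * ∑ j, P i j * M i j
          + ∑ j, ∑ k, P i j * P i k * M j k) := Finset.sum_congr rfl fun i _ => hexp i
    _ = (covMatrix μ Y).trace - (Vᵀ * covMatrix μ condG * V).trace := by
        rw [Finset.sum_add_distrib, Finset.sum_sub_distrib, hT3, htraceY, htraceC, h2T]
        ring
end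
end

section
/- Let X have a Lebesgue density π_X on R^d with support equal to R^d and let f : R^d → R be continuously differentiable with E[f(X)²] < ∞ and E[‖∇f(X)‖²] < ∞. Then c(X) ‖E[∇f(X)]‖² ≤ Var(f(X)), where c(X) = λ_max(E[∇log π_X(X) ∇log π_X(X)^T])^{-1} is the inverse of the largest eigenvalue of the Fisher information matrix, assuming the Fisher information matrix is finite and the integration-by-parts identity E[∇h(X)] = −E[h(X) ∇log π_X(X)] holds for h(x) = f(x) − E[f(X)]. -/
noncomputable section
open MeasureTheory Matrix

open MeasureTheory

variable {α : Type*} [MeasurableSpace α] {μ : Measure α}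

lemma integrable_mul_of_sq {h g : α → ℝ} (hh : AEStronglyMeasurable h μ)
    (hg : AEStronglyMeasurable g μ) (h2 : Integrable (fun x => (h x)^2) μ)
    (g2 : Integrable (fun x => (g x)^2) μ) :
    Integrable (fun x => h x * g x) μ := by
  refine Integrable.mono' (h2.add g2) (hh.mul hg) ?_
  filter_upwards with x
  simp only [Pi.add_apply]
  have : ‖h x * g x‖ = |h x| * |g x| := by rw [Real.norm_eq_abs, abs_mul]
  rw [this]
  nlinarith [sq_abs (h x), sq_abs (g x), sq_nonneg (|h x| - |g x|)]

lemma cs_integral {h g : α → ℝ} (h2 : Integrable (fun x => (h x)^2) μ)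
    (g2 : Integrable (fun x => (g x)^2) μ) (hhg : Integrable (fun x => h x * g x) μ) :
    (∫ x, h x * g x ∂μ)^2 ≤ (∫ x, (h x)^2 ∂μ) * ∫ x, (g x)^2 ∂μ := by
  set a := ∫ x, (g x)^2 ∂μ with ha
  set b := (2 : ℝ) * ∫ x, h x * g x ∂μ with hb
  set c := ∫ x, (h x)^2 ∂μ with hc
  have key : ∀ t : ℝ, 0 ≤ a * (t * t) + b * t + c := by
    intro t
    have hint : ∫ x, (t * g x + h x)^2 ∂μ = a * (t * t) + b * t + c := by
      have e : (fun x => (t * g x + h x)^2)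
          = fun x => ((t * t) * (g x)^2 + (2 * t) * (h x * g x)) + (h x)^2 := by
        funext x; ring
      have i1 : Integrable (fun x => (t * t) * (g x)^2 + (2 * t) * (h x * g x)) μ :=
        (g2.const_mul (t*t)).add (hhg.const_mul (2*t))
      rw [e, integral_add i1 h2, integral_add (g2.const_mul (t*t)) (hhg.const_mul (2*t)),
        integral_const_mul, integral_const_mul]
      ring
    rw [← hint]
    exact integral_nonneg fun x => sq_nonneg _
  have hd := discrim_le_zero key
  rw [discrim, hb] at hd
  nlinarith [hd]
open Matrix

lemma quad_form_le_lam {d : ℕ} {F : Matrix (Fin d) (Fin d) ℝ} (hF : F.IsHermitian) {lam : ℝ}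
    (hub : ∀ t : ℝ, (∃ v : Fin d → ℝ, v ≠ 0 ∧ F.mulVec v = t • v) → t ≤ lam)
    (u : Fin d → ℝ) : u ⬝ᵥ F.mulVec u ≤ lam * (u ⬝ᵥ u) := by
  classical
  have heig : ∀ i, hF.eigenvalues i ≤ lam := by
    intro i
    refine hub _ ⟨hF.eigenvectorBasis i, ?_, ?_⟩
    · intro h0
      have h1 : ‖hF.eigenvectorBasis i‖ = 1 := hF.eigenvectorBasis.orthonormal.1 i
      have : (hF.eigenvectorBasis i : EuclideanSpace ℝ (Fin d)) = 0 := (WithLp.ofLp_eq_zero 2).mp h0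
      rw [this, norm_zero] at h1
      norm_num at h1
    · exact hF.mulVec_eigenvectorBasis i
  set U : Matrix (Fin d) (Fin d) ℝ := (hF.eigenvectorUnitary : Matrix (Fin d) (Fin d) ℝ) with hU
  have hUU : U * star U = 1 := (Matrix.mem_unitaryGroup_iff).mp hF.eigenvectorUnitary.2
  set w : Fin d → ℝ := star U *ᵥ u with hw
  have hDiag : F = U * Matrix.diagonal hF.eigenvalues * star U := by
    have := hF.spectral_theorem
    simpa using this
  have hquad : u ⬝ᵥ F.mulVec u = ∑ i, hF.eigenvalues i * (w i)^2 := by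
    conv_lhs => rw [hDiag]
    rw [Matrix.mul_assoc, ← Matrix.mulVec_mulVec, ← Matrix.mulVec_mulVec,
      Matrix.dotProduct_mulVec u U, ← Matrix.mulVec_transpose]
    have hUt : Uᵀ = star U := by
      rw [Matrix.star_eq_conjTranspose, conjTranspose_eq_transpose_of_trivial]
    rw [hUt, ← hw]
    simp only [Matrix.mulVec_diagonal, dotProduct]
    congr 1; funext i; ring
  have hnorm : w ⬝ᵥ w = u ⬝ᵥ u := by
    rw [hw, Matrix.dotProduct_mulVec, ← Matrix.mulVec_transpose]
    have : (star U)ᵀ = U := by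
      rw [Matrix.star_eq_conjTranspose, conjTranspose_eq_transpose_of_trivial,
        Matrix.transpose_transpose]
    rw [this, Matrix.mulVec_mulVec, hUU, Matrix.one_mulVec]
  have hsum : ∑ i, hF.eigenvalues i * (w i)^2 ≤ lam * (w ⬝ᵥ w) := by
    rw [dotProduct, Finset.mul_sum]
    refine Finset.sum_le_sum fun i _ => ?_
    have h1 : hF.eigenvalues i * (w i)^2 ≤ lam * (w i)^2 :=
      mul_le_mul_of_nonneg_right (heig i) (sq_nonneg _)
    calc hF.eigenvalues i * (w i)^2 ≤ lam * (w i)^2 := h1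
      _ = lam * (w i * w i) := by ring
  rw [hquad, ← hnorm]
  exact hsum
open MeasureTheory

lemma measurable_deriv_line {d : ℕ} {φ : (Fin d → ℝ) → ℝ} (hφ : Measurable φ)
    {D : (Fin d → ℝ) → ℝ} (e : Fin d → ℝ)
    (hD : ∀ x, HasDerivAt (fun t : ℝ => φ (x + t • e)) (D x) 0) : Measurable D := by
  have htn : Filter.Tendsto (fun n : ℕ => (1:ℝ)/(n+1)) Filter.atTop (nhdsWithin 0 {(0:ℝ)}ᶜ) := by
    apply tendsto_nhdsWithin_of_tendsto_nhds_of_eventually_within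
    · exact tendsto_one_div_add_atTop_nhds_zero_nat
    · filter_upwards with n
      simp only [Set.mem_compl_iff, Set.mem_singleton_iff]
      positivity
  have key : ∀ x, Filter.Tendsto
      (fun n : ℕ => ((1:ℝ)/(n+1))⁻¹ * (φ (x + ((1:ℝ)/(n+1)) • e) - φ x))
      Filter.atTop (nhds (D x)) := by
    intro x
    have h1 := (hasDerivAt_iff_tendsto_slope.mp (hD x)).comp htn
    have h2 : ∀ n : ℕ, slope (fun t : ℝ => φ (x + t • e)) 0 ((1:ℝ)/(n+1))
        = ((1:ℝ)/(n+1))⁻¹ * (φ (x + ((1:ℝ)/(n+1)) • e) - φ x) := by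
      intro n
      rw [slope_def_field]
      simp [div_eq_inv_mul, mul_comm]
    refine h1.congr fun n => (h2 n)
  exact measurable_of_tendsto_metrizable
    (fun n => (((hφ.comp ((continuous_id.add continuous_const).measurable)).sub hφ).const_mul _))
    (tendsto_pi_nhds.2 key)
open MeasureTheory

lemma abs_le_abs_of_uIcc {t c : ℝ} (ht : t ∈ Set.uIcc 0 c) : |t| ≤ |c| := by
  have h1 := le_abs_self c
  have h2 := neg_abs_le c
  rw [abs_le]
  constructor <;> rcases Set.mem_uIcc.mp ht with ⟨ha, hb⟩ | ⟨ha, hb⟩ <;> linarith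

lemma continuous_of_line_deriv {d : ℕ} {f : (Fin d → ℝ) → ℝ} {gradf : (Fin d → ℝ) → (Fin d → ℝ)}
    (hf : ∀ x i, HasDerivAt (fun t : ℝ => f (x + t • (Pi.single i (1:ℝ) : Fin d → ℝ)))
      (gradf x i) 0)
    (hgrad_cont : Continuous gradf) : Continuous f := by
  classical
  -- line derivative at arbitrary parameter
  have hline : ∀ (p : Fin d → ℝ) (k : Fin d) (t₀ : ℝ),
      HasDerivAt (fun t : ℝ => f (p + t • (Pi.single k (1:ℝ) : Fin d → ℝ)))
        (gradf (p + t₀ • (Pi.single k (1:ℝ) : Fin d → ℝ)) k) t₀ := by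
    intro p k t₀
    set q := p + t₀ • (Pi.single k (1:ℝ) : Fin d → ℝ) with hq
    have h1 : HasDerivAt ((fun s : ℝ => f (q + s • (Pi.single k (1:ℝ) : Fin d → ℝ)))
        ∘ (fun t : ℝ => t - t₀)) (gradf q k * 1) t₀ :=
      HasDerivAt.comp (x := t₀) (by simpa using hf q k) ((hasDerivAt_id t₀).sub_const t₀)
    rw [mul_one] at h1
    have h1b : (fun t : ℝ => f (q + (t - t₀) • (Pi.single k (1:ℝ) : Fin d → ℝ))) = ((fun s : ℝ => f (q + s • (Pi.single k (1:ℝ) : Fin d → ℝ))) ∘ (fun t : ℝ => t - t₀)) := rfl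
    rw [← h1b] at h1
    have h2 : (fun t : ℝ => f (q + (t - t₀) • (Pi.single k (1:ℝ) : Fin d → ℝ)))
        = fun t : ℝ => f (p + t • (Pi.single k (1:ℝ) : Fin d → ℝ)) := by
      funext t
      congr 1
      rw [hq, sub_smul]
      abel
    rw [← h2]
    exact h1
  -- FTC estimate along a coordinate segment
  have hseg : ∀ (p : Fin d → ℝ) (k : Fin d) (τ : ℝ) (M : ℝ),
      (∀ t ∈ Set.uIcc 0 τ, |gradf (p + t • (Pi.single k (1:ℝ) : Fin d → ℝ)) k| ≤ M) →
      |f (p + τ • (Pi.single k (1:ℝ) : Fin d → ℝ)) - f p| ≤ M * |τ| := by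
    intro p k τ M hM
    have hcont : Continuous (fun t : ℝ => gradf (p + t • (Pi.single k (1:ℝ) : Fin d → ℝ)) k) :=
      (continuous_apply k).comp (hgrad_cont.comp
        (continuous_const.add (continuous_id.smul continuous_const)))
    have hFTC : ∫ t in (0:ℝ)..τ, gradf (p + t • (Pi.single k (1:ℝ) : Fin d → ℝ)) k
        = f (p + τ • (Pi.single k (1:ℝ) : Fin d → ℝ)) - f (p + (0:ℝ) • (Pi.single k (1:ℝ) : Fin d → ℝ)) := by
      exact intervalIntegral.integral_eq_sub_of_hasDerivAt (fun t _ => hline p k t)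
        (hcont.intervalIntegrable 0 τ)
    have h0 : p + (0:ℝ) • (Pi.single k (1:ℝ) : Fin d → ℝ) = p := by simp
    rw [h0] at hFTC
    rw [← hFTC]
    have := intervalIntegral.norm_integral_le_of_norm_le_const (C := M)
      (f := fun t => gradf (p + t • (Pi.single k (1:ℝ) : Fin d → ℝ)) k) (a := 0) (b := τ) ?_
    · simpa [Real.norm_eq_abs] using this
    · intro t ht
      exact hM t (Set.uIoc_subset_uIcc ht)
  -- continuity at each point
  rw [continuous_iff_continuousAt]
  intro a
  obtain ⟨M, hM⟩ := (isCompact_closedBall a 1).exists_bound_of_continuousOn hgrad_cont.continuousOn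
  have hM0 : 0 ≤ M := le_trans (norm_nonneg _) (hM a (Metric.mem_closedBall_self zero_le_one))
  -- the key local estimate
  have key : ∀ x ∈ Metric.closedBall a 1, |f x - f a| ≤ (d * M) * dist x a := by
    intro x hx
    set q : ℕ → (Fin d → ℝ) := fun m j => if (j : ℕ) < m then x j else a j with hqdef
    have hq0 : q 0 = a := by funext j; simp [hqdef]
    have hqd : q d = x := by funext j; simp [hqdef, j.isLt]
    have hdistx : ∀ j : Fin d, |x j - a j| ≤ dist x a := by
      intro j
      have := dist_le_pi_dist x a j
      rwa [Real.dist_eq] at this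
    -- each chain point shifted stays in the ball
    have hmem : ∀ (m : ℕ) (k : Fin d), (k : ℕ) = m →
        ∀ t ∈ Set.uIcc 0 (x k - a k), q m + t • (Pi.single k (1:ℝ) : Fin d → ℝ)
          ∈ Metric.closedBall a 1 := by
      intro m k hk t ht
      rw [Metric.mem_closedBall]
      rw [dist_pi_le_iff zero_le_one]
      intro j
      rw [Real.dist_eq]
      simp only [Pi.add_apply, Pi.smul_apply, smul_eq_mul, hqdef]
      by_cases hj : j = k
      · subst hj
        have hjm : ¬ ((j : ℕ) < m) := by omega
        rw [Pi.single_eq_same]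
        simp only [hjm, if_false]
        have habs : |t| ≤ |x j - a j| := abs_le_abs_of_uIcc ht
        have hd := hdistx j
        have hdist1 : dist x a ≤ 1 := by simpa [Metric.mem_closedBall] using hx
        calc |a j + t * 1 - a j| = |t| := by ring_nf
          _ ≤ |x j - a j| := habs
          _ ≤ dist x a := hd
          _ ≤ 1 := hdist1
      · rw [Pi.single_eq_of_ne hj]
        simp only [mul_zero, add_zero]
        by_cases hjm : (j : ℕ) < m
        · simp only [hjm, if_true]
          have hdist1 : dist x a ≤ 1 := by simpa [Metric.mem_closedBall] using hx
          exact le_trans (hdistx j) hdist1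
        · simp only [hjm, if_false, sub_self, abs_zero]
          exact zero_le_one
    -- step estimate
    have hstepeq : ∀ (m : ℕ) (hm : m < d),
        q (m + 1) = q m + (x ⟨m, hm⟩ - a ⟨m, hm⟩) • ((Pi.single (⟨m, hm⟩ : Fin d) (1:ℝ)) : Fin d → ℝ) := by
      intro m hm
      funext j
      simp only [Pi.add_apply, Pi.smul_apply, smul_eq_mul, hqdef]
      by_cases hj : j = (⟨m, hm⟩ : Fin d)
      · rw [hj]
        simp [Nat.lt_succ_self, Nat.lt_irrefl]
      · rw [Pi.single_eq_of_ne hj, mul_zero, add_zero]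
        have : (j : ℕ) ≠ m := by
          intro hc
          exact hj (Fin.ext hc)
        by_cases hjm : (j : ℕ) < m
        · have : (j:ℕ) < m + 1 := by omega
          simp [hjm, this]
        · have : ¬ ((j:ℕ) < m + 1) := by omega
          simp [hjm, this]
    have hstep : ∀ m ∈ Finset.range d, |f (q (m+1)) - f (q m)| ≤ M * dist x a := by
      intro m hmr
      have hm : m < d := Finset.mem_range.mp hmr
      set k : Fin d := ⟨m, hm⟩ with hk
      have hb : ∀ t ∈ Set.uIcc 0 (x k - a k),
          |gradf (q m + t • (Pi.single k (1:ℝ) : Fin d → ℝ)) k| ≤ M := by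
        intro t ht
        have hmemt := hmem m k rfl t ht
        have h1 := hM _ hmemt
        have h2 : |gradf (q m + t • ((Pi.single k (1:ℝ)) : Fin d → ℝ)) k|
            ≤ ‖gradf (q m + t • ((Pi.single k (1:ℝ)) : Fin d → ℝ))‖ := by
          rw [← Real.norm_eq_abs]; exact norm_le_pi_norm _ k
        exact le_trans h2 h1
      have := hseg (q m) k (x k - a k) M hb
      rw [← hstepeq m hm] at this
      calc |f (q (m+1)) - f (q m)| ≤ M * |x k - a k| := this
        _ ≤ M * dist x a := mul_le_mul_of_nonneg_left (hdistx k) hM0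
    have htel : f x - f a = ∑ m ∈ Finset.range d, (f (q (m+1)) - f (q m)) := by
      rw [Finset.sum_range_sub (fun m => f (q m)) d, hq0, hqd]
    calc |f x - f a| = |∑ m ∈ Finset.range d, (f (q (m+1)) - f (q m))| := by rw [htel]
      _ ≤ ∑ m ∈ Finset.range d, |f (q (m+1)) - f (q m)| := Finset.abs_sum_le_sum_abs _ _
      _ ≤ ∑ _m ∈ Finset.range d, M * dist x a := Finset.sum_le_sum hstep
      _ = (d * M) * dist x a := by rw [Finset.sum_const, Finset.card_range, nsmul_eq_mul]; ring
  -- conclude continuity at a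
  rw [Metric.continuousAt_iff]
  intro ε hε
  refine ⟨min 1 (ε / (d * M + 1)), by positivity, ?_⟩
  intro x hx
  have hx1 : dist x a ≤ 1 := le_of_lt (lt_of_lt_of_le hx (min_le_left _ _))
  have hx2 : dist x a < ε / (d * M + 1) := lt_of_lt_of_le hx (min_le_right _ _)
  have hxball : x ∈ Metric.closedBall a 1 := by rwa [Metric.mem_closedBall]
  have hkey := key x hxball
  rw [Real.dist_eq]
  have hdm : (0:ℝ) ≤ d * M := by positivity
  calc |f x - f a| ≤ (d * M) * dist x a := hkey
    _ ≤ (d * M) * (ε / (d * M + 1)) := mul_le_mul_of_nonneg_left (le_of_lt hx2) hdm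
    _ < ε := by
        rw [div_eq_inv_mul]
        have h1 : (d * M) * ((d * M + 1)⁻¹ * ε) = ((d * M) / (d * M + 1)) * ε := by ring
        rw [h1]
        have h2 : (d * M) / (d * M + 1) < 1 := by
          rw [div_lt_one (by positivity)]
          linarith
        nlinarith


/-- Cramér–Rao-like inequality: `c(X) ‖E[∇f(X)]‖² ≤ Var(f(X))` with
`c(X) = λ_max(Fisher)⁻¹`, under finiteness of the Fisher information matrix and the
integration-by-parts identity `E[∇h(X)] = −E[h(X) ∇log π_X(X)]` for `h = f − E f`. -/
theorem cramer_rao_like_inequality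
    {d : ℕ} (pdf : (Fin d → ℝ) → ℝ) (hpdf_pos : ∀ x, 0 < pdf x) (hpdf_meas : Measurable pdf)
    (ν : Measure (Fin d → ℝ))
    (hν : ν = MeasureTheory.volume.withDensity (fun x => ENNReal.ofReal (pdf x)))
    (hprob : IsProbabilityMeasure ν)
    -- f continuously differentiable with gradient gradf
    (f : (Fin d → ℝ) → ℝ) (gradf : (Fin d → ℝ) → (Fin d → ℝ))
    (hf : ∀ x i, HasDerivAt (fun t : ℝ => f (x + t • (Pi.single i (1:ℝ) : Fin d → ℝ))) (gradf x i) 0)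
    (hgrad_cont : Continuous gradf)
    (hfL2 : Integrable (fun x => (f x)^2) ν)
    (hgradL2 : Integrable (fun x => sqn (gradf x)) ν)
    -- the score function ∇ log π_X
    (score : (Fin d → ℝ) → (Fin d → ℝ))
    (hscore : ∀ x i, HasDerivAt (fun t : ℝ => Real.log (pdf (x + t • (Pi.single i (1:ℝ) : Fin d → ℝ))))
      (score x i) 0)
    -- finite Fisher information matrix
    (hFisherInt : ∀ i j, Integrable (fun x => score x i * score x j) ν)
    (Fisher : Matrix (Fin d) (Fin d) ℝ)
    (hFisher : Fisher = Matrix.of fun i j => ∫ x, score x i * score x j ∂ν)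
    -- λ_max is the largest eigenvalue of the Fisher information matrix
    (lamMax : ℝ)
    (hlamMax : IsGreatest {t : ℝ | ∃ v : Fin d → ℝ, v ≠ 0 ∧ Fisher.mulVec v = t • v} lamMax)
    -- integration by parts identity for h = f − E[f]
    (hIBP : ∀ i, ∫ x, gradf x i ∂ν
      = -∫ x, (f x - ∫ x', f x' ∂ν) * score x i ∂ν) :
    lamMax⁻¹ * sqn (fun i => ∫ x, gradf x i ∂ν)
      ≤ ∫ x, (f x - ∫ x', f x' ∂ν)^2 ∂ν := by
  classical
  haveI := hprob
  -- continuity and measurability of f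
  have hf_cont : Continuous f := continuous_of_line_deriv hf hgrad_cont
  set c : ℝ := ∫ x', f x' ∂ν with hc
  have hhAESM : AEStronglyMeasurable (fun x => f x - c) ν :=
    (hf_cont.aestronglyMeasurable.sub aestronglyMeasurable_const)
  have hfM2 : MemLp f 2 ν := (memLp_two_iff_integrable_sq hf_cont.aestronglyMeasurable).mpr hfL2
  have hhM2 : MemLp (fun x => f x - c) 2 ν := hfM2.sub (memLp_const c)
  have hh2 : Integrable (fun x => (f x - c)^2) ν :=
    (memLp_two_iff_integrable_sq hhAESM).mp hhM2
  -- measurability of the score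
  have hsmeas : ∀ i, Measurable (fun x => score x i) := by
    intro i
    exact measurable_deriv_line (hpdf_meas.log) (Pi.single i 1) (fun x => hscore x i)
  have hs2 : ∀ i, Integrable (fun x => (score x i)^2) ν := by
    intro i
    simpa [pow_two] using hFisherInt i i
  -- products are integrable
  have hhs : ∀ i, Integrable (fun x => (f x - c) * score x i) ν := fun i =>
    integrable_mul_of_sq hhAESM (hsmeas i).aestronglyMeasurable hh2 (hs2 i)
  set u : Fin d → ℝ := fun i => ∫ x, gradf x i ∂ν with hu
  set g : (Fin d → ℝ) → ℝ := fun x => ∑ i, u i * score x i with hg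
  have hgmeas : Measurable g := by
    apply Finset.measurable_sum
    intro i _
    exact measurable_const.mul (hsmeas i)
  have hgsq : (fun x => (g x)^2) = fun x => ∑ i, ∑ j, (u i * u j) * (score x i * score x j) := by
    funext x
    rw [sq, hg, Finset.sum_mul_sum]
    exact Finset.sum_congr rfl fun i _ => Finset.sum_congr rfl fun j _ => by ring
  have hg2 : Integrable (fun x => (g x)^2) ν := by
    rw [hgsq]
    exact integrable_finset_sum _ fun i _ =>
      integrable_finset_sum _ fun j _ => (hFisherInt i j).const_mul _
  have hhg : Integrable (fun x => (f x - c) * g x) ν :=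
    integrable_mul_of_sq hhAESM hgmeas.aestronglyMeasurable hh2 hg2
  -- ∫ h g = - sqn u
  have hIBP' : ∀ i, ∫ x, (f x - c) * score x i ∂ν = -(u i) := by
    intro i
    simp only [hu]
    linarith [hIBP i]
  have hInt1 : ∫ x, (f x - c) * g x ∂ν = -(sqn u) := by
    have e1 : (fun x => (f x - c) * g x) = fun x => ∑ i, u i * ((f x - c) * score x i) := by
      funext x
      rw [hg, Finset.mul_sum]
      exact Finset.sum_congr rfl fun i _ => by ring
    rw [e1, integral_finset_sum _ fun i _ => (hhs i).const_mul (u i)]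
    have e2 : ∀ i, ∫ x, u i * ((f x - c) * score x i) ∂ν = u i * -(u i) := by
      intro i
      rw [integral_const_mul, hIBP' i]
    rw [Finset.sum_congr rfl fun i _ => e2 i]
    rw [sqn]
    rw [← Finset.sum_neg_distrib]
    exact Finset.sum_congr rfl fun i _ => by ring
  -- ∫ g² = u ⬝ᵥ Fisher *ᵥ u
  have hInt2 : ∫ x, (g x)^2 ∂ν = u ⬝ᵥ Fisher.mulVec u := by
    rw [hgsq, integral_finset_sum _ fun i _ =>
      integrable_finset_sum _ fun j _ => (hFisherInt i j).const_mul _]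
    have e3 : ∀ i, ∫ x, ∑ j, (u i * u j) * (score x i * score x j) ∂ν
        = ∑ j, (u i * u j) * ∫ x, score x i * score x j ∂ν := by
      intro i
      rw [integral_finset_sum _ fun j _ => (hFisherInt i j).const_mul _]
      exact Finset.sum_congr rfl fun j _ => integral_const_mul _ _
    rw [Finset.sum_congr rfl fun i _ => e3 i]
    simp only [dotProduct, Matrix.mulVec, hFisher, Matrix.of_apply, Finset.mul_sum]
    exact Finset.sum_congr rfl fun i _ => Finset.sum_congr rfl fun j _ => by ring
  -- Cauchy–Schwarz
  have hCS : (sqn u)^2 ≤ (∫ x, (f x - c)^2 ∂ν) * ∫ x, (g x)^2 ∂ν := by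
    have := cs_integral hh2 hg2 hhg
    rw [hInt1] at this
    simpa using this
  -- spectral bound
  have hHerm : Fisher.IsHermitian := by
    rw [Matrix.IsHermitian]
    ext i j
    rw [Matrix.conjTranspose_apply, hFisher]
    simp only [Matrix.of_apply, star_trivial]
    exact integral_congr_ae (Filter.Eventually.of_forall fun x => mul_comm _ _)
  have hquad : u ⬝ᵥ Fisher.mulVec u ≤ lamMax * (u ⬝ᵥ u) :=
    quad_form_le_lam hHerm (fun t ht => hlamMax.2 ht) u
  have huu : u ⬝ᵥ u = sqn u := by
    simp [dotProduct, sqn, sq]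
  -- put things together
  have hV0 : 0 ≤ ∫ x, (f x - c)^2 ∂ν := integral_nonneg fun x => sq_nonneg _
  have hI0 : 0 ≤ ∫ x, (g x)^2 ∂ν := integral_nonneg fun x => sq_nonneg _
  have hS0 : 0 ≤ sqn u := Finset.sum_nonneg fun i _ => sq_nonneg _
  set V := ∫ x, (f x - c)^2 ∂ν with hV
  set I := ∫ x, (g x)^2 ∂ν with hI
  set S := sqn u with hS
  have hIle : I ≤ lamMax * S := by rw [hInt2, ← huu]; exact hquad
  show lamMax⁻¹ * S ≤ V
  rcases le_or_gt lamMax 0 with hneg | hpos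
  · have h1 : lamMax⁻¹ * S ≤ 0 := mul_nonpos_of_nonpos_of_nonneg (inv_nonpos.mpr hneg) hS0
    linarith
  · rcases eq_or_lt_of_le hS0 with hSz | hSpos
    · rw [← hSz, mul_zero]; exact hV0
    · rw [inv_mul_le_iff₀ hpos]
      nlinarith [mul_le_mul_of_nonneg_left hIle hV0, hCS, hSpos, hV0]
end
end

section
/- Let X be a random vector on R^d satisfying the Poincaré inequality with constant C(X): Var(f(X)) ≤ C(X) E[‖∇f(X)‖²] for all continuously differentiable f. Let G : R^d → R^m be continuously differentiable with E[‖∇G(X)‖_F²] < ∞, and let V_s ∈ R^{m×s}, V_⊥ ∈ R^{m×(m−s)} be orthogonal complements with orthonormal columns. Then E[‖V_⊥ V_⊥^T(G(X) − E[G(X)])‖²] ≤ C(X)(E[‖∇G(X)‖_F²] − E[‖V_s^T ∇G(X)‖_F²]). -/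
noncomputable section
open MeasureTheory Matrix

def frobSq {m n : ℕ} (A : Matrix (Fin m) (Fin n) ℝ) : ℝ := ∑ i, ∑ j, (A i j)^2

lemma frobSq_nonneg {m n : ℕ} (A : Matrix (Fin m) (Fin n) ℝ) : 0 ≤ frobSq A :=
  Finset.sum_nonneg fun _ _ => Finset.sum_nonneg fun _ _ => sq_nonneg _

lemma abs_le_one_add_sq (a : ℝ) : |a| ≤ 1 + a^2 := by
  rcases abs_cases a with ⟨h, _⟩ | ⟨h, _⟩ <;> nlinarith [sq_nonneg (a - 1), sq_nonneg (a + 1)]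

lemma sq_le_sqn {n : ℕ} (v : Fin n → ℝ) (i : Fin n) : (v i)^2 ≤ sqn v :=
  Finset.single_le_sum (f := fun j => (v j)^2) (fun _ _ => sq_nonneg _) (Finset.mem_univ i)

lemma sqn_sub_le {n : ℕ} (v w : Fin n → ℝ) : sqn (v - w) ≤ 2 * sqn v + 2 * sqn w := by
  unfold sqn
  rw [Finset.mul_sum, Finset.mul_sum, ← Finset.sum_add_distrib]
  refine Finset.sum_le_sum fun i _ => ?_
  have : (v - w) i = v i - w i := rfl
  rw [this]
  nlinarith [sq_nonneg (v i + w i)]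

lemma sqn_mulVec_le {m n : ℕ} (M : Matrix (Fin m) (Fin n) ℝ) (v : Fin n → ℝ) :
    sqn (M.mulVec v) ≤ frobSq M * sqn v := by
  unfold sqn frobSq
  rw [Finset.sum_mul]
  refine Finset.sum_le_sum fun i _ => ?_
  have h : M.mulVec v i = ∑ j, M i j * v j := by
    simp [Matrix.mulVec, dotProduct]
  rw [h]
  exact Finset.sum_mul_sq_le_sq_mul_sq _ _ _

lemma frobSq_mul_le {m n k : ℕ} (A : Matrix (Fin m) (Fin n) ℝ) (B : Matrix (Fin n) (Fin k) ℝ) :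
    frobSq (A * B) ≤ frobSq A * frobSq B := by
  unfold frobSq
  rw [Finset.sum_mul]
  refine Finset.sum_le_sum fun i _ => ?_
  calc ∑ j, ((A * B) i j)^2 = ∑ j, (∑ l, A i l * B l j)^2 := by
        simp [Matrix.mul_apply]
    _ ≤ ∑ j, (∑ l, (A i l)^2) * (∑ l, (B l j)^2) :=
        Finset.sum_le_sum fun j _ => Finset.sum_mul_sq_le_sq_mul_sq _ _ _
    _ = (∑ l, (A i l)^2) * ∑ j, ∑ l, (B l j)^2 := by rw [← Finset.mul_sum]
    _ = (∑ l, (A i l)^2) * ∑ l, ∑ j, (B l j)^2 := by rw [Finset.sum_comm]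

lemma frobSq_eq_trace {m n : ℕ} (A : Matrix (Fin m) (Fin n) ℝ) :
    frobSq A = Matrix.trace (Aᵀ * A) := by
  unfold frobSq
  simp only [Matrix.trace, Matrix.diag, Matrix.mul_apply, Matrix.transpose_apply, sq]
  exact Finset.sum_comm

lemma continuous_sqn {n : ℕ} : Continuous (sqn (n := n)) := by
  unfold sqn
  exact continuous_finset_sum _ fun i _ => (continuous_apply i).pow 2

lemma continuous_frobSq {m n : ℕ} : Continuous (frobSq (m := m) (n := n)) := by
  unfold frobSq
  exact continuous_finset_sum _ fun i _ => continuous_finset_sum _ fun j _ =>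
    (((continuous_apply j).comp (continuous_apply i)).pow 2)


lemma continuous_of_partials {d : ℕ} (g : (Fin d → ℝ) → ℝ) (p : (Fin d → ℝ) → Fin d → ℝ)
    (hg : ∀ x j, HasDerivAt (fun t : ℝ => g (x + t • (Pi.single j (1:ℝ) : Fin d → ℝ)))
      (p x j) 0)
    (hp : Continuous p) : Continuous g := by
  have hline : ∀ (x : Fin d → ℝ) (j : Fin d) (t₀ : ℝ),
      HasDerivAt (fun t : ℝ => g (x + t • (Pi.single j (1:ℝ) : Fin d → ℝ)))
        (p (x + t₀ • (Pi.single j (1:ℝ) : Fin d → ℝ)) j) t₀ := by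
    intro x j t₀
    have h1 := hg (x + t₀ • (Pi.single j (1:ℝ) : Fin d → ℝ)) j
    have h2 : HasDerivAt (fun t : ℝ => t - t₀) 1 t₀ := (hasDerivAt_id t₀).sub_const t₀
    have h3 := HasDerivAt.comp_of_eq (hh₂ := h1) (hh := h2) (hy := by ring)
    have heq : ((fun t : ℝ => g (x + t₀ • (Pi.single j (1:ℝ) : Fin d → ℝ)
          + t • (Pi.single j (1:ℝ) : Fin d → ℝ))) ∘ fun t : ℝ => t - t₀)
        = fun t : ℝ => g (x + t • (Pi.single j (1:ℝ) : Fin d → ℝ)) := by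
      funext t
      simp only [Function.comp_apply]
      congr 1
      rw [sub_smul]
      abel
    rw [heq, mul_one] at h3
    exact h3
  rw [continuous_iff_continuousAt]
  intro x₀
  obtain ⟨M, hM⟩ := (isCompact_closedBall x₀ 1).exists_bound_of_continuousOn hp.continuousOn
  have hM0 : 0 ≤ M := le_trans (norm_nonneg _) (hM x₀ (Metric.mem_closedBall_self zero_le_one))
  have key : ∀ y : Fin d → ℝ, dist y x₀ ≤ 1 → |g y - g x₀| ≤ (M * d) * dist y x₀ := by
    intro y hy
    set q : ℕ → (Fin d → ℝ) := fun n i => if (i : ℕ) < n then y i else x₀ i with hq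
    have hq0 : q 0 = x₀ := funext fun i => by simp [hq]
    have hqd : q d = y := funext fun i => by simp [hq, i.isLt]
    have htel : g y - g x₀ = ∑ k ∈ Finset.range d, (g (q (k+1)) - g (q k)) := by
      rw [Finset.sum_range_sub (fun n => g (q n)), hq0, hqd]
    have hstep : ∀ kk, kk < d → |g (q (kk+1)) - g (q kk)| ≤ M * dist y x₀ := by
      intro kk hkk
      set j : Fin d := ⟨kk, hkk⟩ with hj
      set c : ℝ := y j - x₀ j with hc
      set s : Set ℝ := Set.uIcc (0:ℝ) c with hs
      have habs : ∀ t ∈ s, |t| ≤ |c| := by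
        intro t ht
        rw [hs, Set.mem_uIcc] at ht
        rcases ht with ⟨h1, h2⟩ | ⟨h1, h2⟩ <;>
          exact abs_le.mpr ⟨by nlinarith [neg_abs_le c, le_abs_self c],
            by nlinarith [neg_abs_le c, le_abs_self c]⟩
      have hcd : |c| ≤ dist y x₀ := by
        rw [hc]
        calc |y j - x₀ j| = dist (y j) (x₀ j) := (Real.dist_eq _ _).symm
          _ ≤ dist y x₀ := dist_le_pi_dist y x₀ j
      have hqkj : q kk j = x₀ j := by simp [hq, hj]
      have hmem : ∀ t ∈ s, (q kk + t • (Pi.single j (1:ℝ) : Fin d → ℝ))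
          ∈ Metric.closedBall x₀ 1 := by
        intro t ht
        rw [Metric.mem_closedBall]
        refine le_trans ?_ hy
        rw [dist_pi_le_iff dist_nonneg]
        intro i
        by_cases hij : i = j
        · have hco : (q kk + t • (Pi.single j (1:ℝ) : Fin d → ℝ)) j = x₀ j + t := by
            simp [hqkj]
          rw [hij, hco, Real.dist_eq, add_sub_cancel_left]
          exact le_trans (habs t ht) hcd
        · have hco : (q kk + t • (Pi.single j (1:ℝ) : Fin d → ℝ)) i = q kk i := by
            simp [Pi.single_eq_of_ne hij]
          rw [hco]
          by_cases hik : (i : ℕ) < kk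
          · have : q kk i = y i := by simp [hq, hik]
            rw [this]
            exact dist_le_pi_dist y x₀ i
          · have : q kk i = x₀ i := by simp [hq, hik]
            rw [this, dist_self]
            exact dist_nonneg
      have hderiv : ∀ t ∈ s,
          HasDerivWithinAt (fun t : ℝ => g (q kk + t • (Pi.single j (1:ℝ) : Fin d → ℝ)))
            (p (q kk + t • (Pi.single j (1:ℝ) : Fin d → ℝ)) j) s t :=
        fun t _ => (hline (q kk) j t).hasDerivWithinAt
      have hbound : ∀ t ∈ s, ‖p (q kk + t • (Pi.single j (1:ℝ) : Fin d → ℝ)) j‖ ≤ M :=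
        fun t ht => le_trans (norm_le_pi_norm _ j) (hM _ (hmem t ht))
      have hmvt := Convex.norm_image_sub_le_of_norm_hasDerivWithin_le hderiv hbound
        (convex_uIcc (0:ℝ) c) Set.left_mem_uIcc Set.right_mem_uIcc
      have hq1 : q kk + c • (Pi.single j (1:ℝ) : Fin d → ℝ) = q (kk+1) := by
        funext i
        by_cases hij : i = j
        · rw [hij]
          have h1 : (q kk + c • (Pi.single j (1:ℝ) : Fin d → ℝ)) j = x₀ j + c := by
            simp [hqkj]
          have h2 : q (kk+1) j = y j := by simp [hq, hj]
          rw [h1, h2, hc]; ring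
        · have h1 : (q kk + c • (Pi.single j (1:ℝ) : Fin d → ℝ)) i = q kk i := by
            simp [Pi.single_eq_of_ne hij]
          have hik : (i : ℕ) ≠ kk := by
            intro h
            exact hij (Fin.ext (by rw [hj]; exact h))
          have h2 : q (kk+1) i = q kk i := by
            show (if (i : ℕ) < kk + 1 then y i else x₀ i) = if (i : ℕ) < kk then y i else x₀ i
            exact if_congr (by omega) rfl rfl
          rw [h1, h2]
      have hφ0 : q kk + (0:ℝ) • (Pi.single j (1:ℝ) : Fin d → ℝ) = q kk := by simp
      rw [hφ0, hq1] at hmvt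
      calc |g (q (kk+1)) - g (q kk)| ≤ M * ‖c - 0‖ := hmvt
        _ = M * |c| := by rw [sub_zero, Real.norm_eq_abs]
        _ ≤ M * dist y x₀ := mul_le_mul_of_nonneg_left hcd hM0
    calc |g y - g x₀| = |∑ kk ∈ Finset.range d, (g (q (kk+1)) - g (q kk))| := by rw [htel]
      _ ≤ ∑ kk ∈ Finset.range d, |g (q (kk+1)) - g (q kk)| := Finset.abs_sum_le_sum_abs _ _
      _ ≤ ∑ _kk ∈ Finset.range d, M * dist y x₀ :=
          Finset.sum_le_sum fun kk hkk => hstep kk (Finset.mem_range.mp hkk)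
      _ = (M * d) * dist y x₀ := by
          rw [Finset.sum_const, Finset.card_range, nsmul_eq_mul]; ring
  rw [Metric.continuousAt_iff]
  intro ε hε
  have hpos : (0:ℝ) < M * d + 1 := by positivity
  refine ⟨min 1 (ε / (M * d + 1)), lt_min one_pos (div_pos hε hpos), fun {y} hy => ?_⟩
  have h1 : dist y x₀ ≤ 1 := le_of_lt (lt_of_lt_of_le hy (min_le_left _ _))
  have h2 := key y h1
  have hd : dist y x₀ < ε / (M * d + 1) := lt_of_lt_of_le hy (min_le_right _ _)
  rw [lt_div_iff₀ hpos] at hd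
  rw [Real.dist_eq]
  calc |g y - g x₀| ≤ (M * d) * dist y x₀ := h2
    _ < ε := by nlinarith [dist_nonneg (x := y) (y := x₀)]

lemma sqn_row_le_frobSq {m n : ℕ} (A : Matrix (Fin m) (Fin n) ℝ) (i : Fin m) :
    sqn (A i) ≤ frobSq A :=
  Finset.single_le_sum (f := fun i' => sqn (A i'))
    (fun _ _ => sqn_nonneg _) (Finset.mem_univ i)

lemma sum_sqn_row {m n : ℕ} (A : Matrix (Fin m) (Fin n) ℝ) :
    ∑ i, sqn (A i) = frobSq A := rfl

lemma frobSq_proj {m s k d : ℕ} (V : Matrix (Fin m) (Fin s) ℝ) (Vp : Matrix (Fin m) (Fin k) ℝ)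
    (hVp : Vpᵀ * Vp = 1) (hcompl : V * Vᵀ + Vp * Vpᵀ = 1) (A : Matrix (Fin m) (Fin d) ℝ) :
    frobSq ((Vp * Vpᵀ) * A) = frobSq A - frobSq (Vᵀ * A) := by
  have hPP : (Vp * Vpᵀ) * (Vp * Vpᵀ) = Vp * Vpᵀ := by
    rw [Matrix.mul_assoc Vp Vpᵀ, ← Matrix.mul_assoc Vpᵀ Vp, hVp, Matrix.one_mul]
  simp only [frobSq_eq_trace, Matrix.transpose_mul, Matrix.transpose_transpose]
  have h1 : Aᵀ * (Vp * Vpᵀ) * (Vp * Vpᵀ * A) = Aᵀ * (Vp * Vpᵀ * A) := by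
    rw [Matrix.mul_assoc Aᵀ, ← Matrix.mul_assoc (Vp * Vpᵀ) (Vp * Vpᵀ), hPP]
  rw [h1]
  have h2 : Vp * Vpᵀ = 1 - V * Vᵀ := by rw [eq_sub_iff_add_eq, add_comm]; exact hcompl
  rw [h2, Matrix.sub_mul, Matrix.one_mul, Matrix.mul_sub, Matrix.trace_sub]
  simp only [Matrix.mul_assoc]


/-- if the law of `X` satisfies a Poincaré inequality with constant `C(X)`,
then for `G` continuously differentiable with square-integrable Jacobian and orthogonal
complements `V_s`, `V_⊥`:
`E‖V_⊥V_⊥ᵀ(G(X) − E G(X))‖² ≤ C(X)(E‖∇G(X)‖_F² − E‖V_sᵀ∇G(X)‖_F²)`. -/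
theorem poincare_componentwise_output_bound
    {d m s k : ℕ} (hk : s + k = m)
    {Ω : Type*} [MeasurableSpace Ω] (μ : Measure Ω) [IsProbabilityMeasure μ]
    (X : Ω → (Fin d → ℝ)) (hX : Measurable X)
    (C : ℝ)
    -- Poincaré inequality for the law of X with constant C(X)
    (hPoincare : ∀ (f : (Fin d → ℝ) → ℝ) (gradf : (Fin d → ℝ) → (Fin d → ℝ)),
      (∀ x i, HasDerivAt (fun t : ℝ => f (x + t • (Pi.single i (1:ℝ) : Fin d → ℝ)))
        (gradf x i) 0) →
      Continuous gradf →
      ∫ ω, (f (X ω) - ∫ ω', f (X ω') ∂μ)^2 ∂μ ≤ C * ∫ ω, sqn (gradf (X ω)) ∂μ)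
    -- G continuously differentiable with Jacobian DG and E‖∇G(X)‖_F² < ∞
    (G : (Fin d → ℝ) → (Fin m → ℝ)) (DG : (Fin d → ℝ) → Matrix (Fin m) (Fin d) ℝ)
    (hDG : ∀ x i j, HasDerivAt (fun t : ℝ => G (x + t • (Pi.single j (1:ℝ) : Fin d → ℝ)) i)
      (DG x i j) 0)
    (hDGcont : Continuous DG)
    (hGL2 : Integrable (fun ω => sqn (G (X ω))) μ)
    (hDGL2 : Integrable (fun ω => frobSq (DG (X ω))) μ)
    (V : Matrix (Fin m) (Fin s) ℝ) (hV : Vᵀ * V = 1)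
    (Vp : Matrix (Fin m) (Fin k) ℝ) (hVp : Vpᵀ * Vp = 1)
    (hcompl : V * Vᵀ + Vp * Vpᵀ = 1) :
    ∫ ω, sqn ((Vp * Vpᵀ).mulVec (G (X ω) - ∫ ω', G (X ω') ∂μ)) ∂μ
      ≤ C * ((∫ ω, frobSq (DG (X ω)) ∂μ) - ∫ ω, frobSq (Vᵀ * DG (X ω)) ∂μ) := by
  classical
  set P : Matrix (Fin m) (Fin m) ℝ := Vp * Vpᵀ with hP
  have hPP : P * P = P := by
    rw [hP, Matrix.mul_assoc Vp Vpᵀ, ← Matrix.mul_assoc Vpᵀ Vp, hVp, Matrix.one_mul]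
  have hproj : ∀ A : Matrix (Fin m) (Fin d) ℝ,
      frobSq (P * A) = frobSq A - frobSq (Vᵀ * A) := fun A =>
    frobSq_proj V Vp hVp hcompl A
  -- continuity / measurability
  have hGcont : Continuous G := by
    refine continuous_pi fun i => ?_
    refine continuous_of_partials (fun x => G x i) (fun x j => DG x i j)
      (fun x j => hDG x i j) ?_
    exact continuous_pi fun j => (continuous_apply j).comp ((continuous_apply i).comp hDGcont)
  have hgGm : Measurable fun ω => G (X ω) := hGcont.measurable.comp hX
  set μG : Fin m → ℝ := ∫ ω', G (X ω') ∂μ with hμG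
  have hInt_gG : Integrable (fun ω => G (X ω)) μ := by
    refine Integrable.mono' ((integrable_const (1:ℝ)).add hGL2) hgGm.aestronglyMeasurable ?_
    refine Filter.Eventually.of_forall fun ω => ?_
    simp only [Pi.add_apply]
    rw [pi_norm_le_iff_of_nonneg (by linarith [sqn_nonneg (G (X ω))])]
    intro i
    rw [Real.norm_eq_abs]
    exact le_trans (abs_le_one_add_sq _) (by linarith [sq_le_sqn (G (X ω)) i])
  have hcomp_j : ∀ j, Integrable (fun ω => G (X ω) j) μ := fun j =>
    (ContinuousLinearMap.proj (R := ℝ) (φ := fun _ : Fin m => ℝ) j).integrable_comp hInt_gG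
  have hμG_apply : ∀ j, μG j = ∫ ω, G (X ω) j ∂μ := by
    intro j
    rw [hμG]
    exact (ContinuousLinearMap.integral_comp_comm
      (ContinuousLinearMap.proj (R := ℝ) (φ := fun _ : Fin m => ℝ) j) hInt_gG).symm
  -- componentwise functions
  set F : Fin m → ((Fin d → ℝ) → ℝ) := fun i x => ∑ j, P i j * G x j with hF
  set gradF : Fin m → ((Fin d → ℝ) → (Fin d → ℝ)) :=
    fun i x j' => ∑ j, P i j * DG x j j' with hgradF
  have hgradFrow : ∀ i x, gradF i x = (P * DG x) i := by
    intro i x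
    funext j'
    rw [hgradF]
    simp [Matrix.mul_apply]
  have hgradFcont : ∀ i, Continuous (gradF i) := by
    intro i
    refine continuous_pi fun j' => ?_
    exact continuous_finset_sum _ fun j _ => continuous_const.mul
      ((continuous_apply j').comp ((continuous_apply j).comp hDGcont))
  have hFcont : ∀ i, Continuous (F i) := fun i =>
    continuous_finset_sum _ fun j _ => continuous_const.mul ((continuous_apply j).comp hGcont)
  have hPoi : ∀ i, ∫ ω, (F i (X ω) - ∫ ω', F i (X ω') ∂μ)^2 ∂μ
      ≤ C * ∫ ω, sqn (gradF i (X ω)) ∂μ := by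
    intro i
    refine hPoincare (F i) (gradF i) ?_ (hgradFcont i)
    intro x j'
    exact HasDerivAt.fun_sum fun j _ => HasDerivAt.const_mul (P i j) (hDG x j j')
  have hEF : ∀ i, ∫ ω', F i (X ω') ∂μ = ∑ j, P i j * μG j := by
    intro i
    calc ∫ ω', F i (X ω') ∂μ = ∑ j, ∫ ω', P i j * G (X ω') j ∂μ :=
        integral_finset_sum _ fun j _ => (hcomp_j j).const_mul (P i j)
      _ = ∑ j, P i j * μG j := by
        refine Finset.sum_congr rfl fun j _ => ?_
        rw [integral_const_mul, hμG_apply j]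
  have hpoint : ∀ i ω, F i (X ω) - ∫ ω', F i (X ω') ∂μ = P.mulVec (G (X ω) - μG) i := by
    intro i ω
    rw [hEF i]
    have h1 : P.mulVec (G (X ω) - μG) i = ∑ j, P i j * (G (X ω) j - μG j) := by
      simp [Matrix.mulVec, dotProduct]
    rw [h1]
    have h2 : F i (X ω) = ∑ j, P i j * G (X ω) j := rfl
    rw [h2]
    rw [← Finset.sum_sub_distrib]
    exact Finset.sum_congr rfl fun j _ => by ring
  have hsq : ∀ i, Integrable (fun ω => (F i (X ω) - ∫ ω', F i (X ω') ∂μ)^2) μ := by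
    intro i
    refine Integrable.mono'
      (((hGL2.const_mul 2).add (integrable_const (2 * sqn μG))).const_mul (frobSq P))
      ((((hFcont i).measurable.comp hX).sub measurable_const).pow_const
        2).aestronglyMeasurable ?_
    refine Filter.Eventually.of_forall fun ω => ?_
    simp only [Pi.add_apply]
    rw [Real.norm_eq_abs, abs_of_nonneg (sq_nonneg _), hpoint i ω]
    calc (P.mulVec (G (X ω) - μG) i)^2 ≤ sqn (P.mulVec (G (X ω) - μG)) :=
        sq_le_sqn _ i
      _ ≤ frobSq P * sqn (G (X ω) - μG) := sqn_mulVec_le _ _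
      _ ≤ frobSq P * (2 * sqn (G (X ω)) + 2 * sqn μG) :=
        mul_le_mul_of_nonneg_left (sqn_sub_le _ _) (frobSq_nonneg _)
  have hgrad_int : ∀ i, Integrable (fun ω => sqn (gradF i (X ω))) μ := by
    intro i
    refine Integrable.mono' (hDGL2.const_mul (frobSq P))
      (((continuous_sqn.comp (hgradFcont i)).measurable.comp hX).aestronglyMeasurable) ?_
    refine Filter.Eventually.of_forall fun ω => ?_
    rw [Real.norm_eq_abs, abs_of_nonneg (sqn_nonneg _)]
    calc sqn (gradF i (X ω)) = sqn ((P * DG (X ω)) i) := by rw [hgradFrow]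
      _ ≤ frobSq (P * DG (X ω)) := sqn_row_le_frobSq _ i
      _ ≤ frobSq P * frobSq (DG (X ω)) := frobSq_mul_le _ _
  have hVDGint : Integrable (fun ω => frobSq (Vᵀ * DG (X ω))) μ := by
    refine Integrable.mono' (hDGL2.const_mul (frobSq Vᵀ)) ?_ ?_
    · have hc : Continuous fun A : Matrix (Fin m) (Fin d) ℝ => Vᵀ * A := by
        refine continuous_pi fun r => ?_
        refine continuous_pi fun j => ?_
        have he : (fun A : Matrix (Fin m) (Fin d) ℝ => (Vᵀ * A) r j)
            = fun A : Matrix (Fin m) (Fin d) ℝ => ∑ l, Vᵀ r l * A l j := by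
          funext A
          rw [Matrix.mul_apply]
        rw [he]
        exact continuous_finset_sum _ fun l _ => continuous_const.mul
          ((continuous_apply j).comp (continuous_apply l))
      exact ((continuous_frobSq.comp (hc.comp hDGcont)).measurable.comp hX).aestronglyMeasurable
    · refine Filter.Eventually.of_forall fun ω => ?_
      rw [Real.norm_eq_abs, abs_of_nonneg (frobSq_nonneg _)]
      exact frobSq_mul_le _ _
  have key1 : ∀ ω, sqn (P.mulVec (G (X ω) - μG))
      = ∑ i, (F i (X ω) - ∫ ω', F i (X ω') ∂μ)^2 :=
    fun ω => Finset.sum_congr rfl fun i _ => by rw [hpoint i ω]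
  calc ∫ ω, sqn (P.mulVec (G (X ω) - μG)) ∂μ
      = ∫ ω, ∑ i, (F i (X ω) - ∫ ω', F i (X ω') ∂μ)^2 ∂μ :=
        integral_congr_ae (Filter.Eventually.of_forall fun ω => key1 ω)
    _ = ∑ i, ∫ ω, (F i (X ω) - ∫ ω', F i (X ω') ∂μ)^2 ∂μ :=
        integral_finset_sum _ fun i _ => hsq i
    _ ≤ ∑ i, C * ∫ ω, sqn (gradF i (X ω)) ∂μ := Finset.sum_le_sum fun i _ => hPoi i
    _ = C * ∑ i, ∫ ω, sqn (gradF i (X ω)) ∂μ := by rw [Finset.mul_sum]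
    _ = C * ∫ ω, ∑ i, sqn (gradF i (X ω)) ∂μ := by
        rw [integral_finset_sum _ fun i _ => hgrad_int i]
    _ = C * ∫ ω, frobSq (P * DG (X ω)) ∂μ := by
        congr 1
    _ = C * ∫ ω, (frobSq (DG (X ω)) - frobSq (Vᵀ * DG (X ω))) ∂μ := by
        congr 1
        exact integral_congr_ae (Filter.Eventually.of_forall fun ω => hproj _)
    _ = C * ((∫ ω, frobSq (DG (X ω)) ∂μ) - ∫ ω, frobSq (Vᵀ * DG (X ω)) ∂μ) := by
        rw [integral_sub hDGL2 hVDGint]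
end
end
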